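/- arXiv:2203.15168 — 3 statements merged into one kernel-verified Lean document; each statement's English description precedes it below -/
import Mathlib

section
/- For every nonnegative integer M ≥ 1 and |q| < 1, the sums S_M = ∑_{n≥0} (q^{2M};q)_n (q^{2-2M};q^2)_n / ((q^{4M+1};q^2)_n (q^3;q^3)_n) · (-1)^n q^{binom(n,2)+n+2Mn} satisfy the recurrence S_M / S_{M-1} = (1 - q^{4M-3})(1 - q^{4M-1}) / ((1 - q^{2M-1})(1 - q^{6M-3})). -/
open Finset

noncomputable def qPoch (a q : ℂ) (n : ℕ) : ℂ := ∏ k ∈ Finset.range n, (1 - a * q ^ k)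

noncomputable def qPochInf (a q : ℂ) : ℂ := ∏' k : ℕ, (1 - a * q ^ k)

noncomputable def S (q : ℂ) (M : ℕ) : ℂ :=
  ∑' n : ℕ, (qPoch (q ^ (2 * M)) q n * qPoch (q ^ 2 * (q ^ (2 * M))⁻¹) (q ^ 2) n
    / (qPoch (q ^ (4 * M + 1)) (q ^ 2) n * qPoch (q ^ 3) (q ^ 3) n)
    * (-1 : ℂ) ^ n * q ^ (n.choose 2 + n + 2 * M * n))

/-- The summand of `S`. -/
noncomputable def T (q : ℂ) (M : ℕ) (n : ℕ) : ℂ :=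
  qPoch (q ^ (2 * M)) q n * qPoch (q ^ 2 * (q ^ (2 * M))⁻¹) (q ^ 2) n
    / (qPoch (q ^ (4 * M + 1)) (q ^ 2) n * qPoch (q ^ 3) (q ^ 3) n)
    * (-1 : ℂ) ^ n * q ^ (n.choose 2 + n + 2 * M * n)

/-- The telescoping certificate. -/
noncomputable def Gfun (q : ℂ) (m : ℕ) (n : ℕ) : ℂ :=
  (1 - q ^ (4 * m + 1)) * (1 - q ^ (4 * m + 3)) / ((1 - q ^ (2 * m + 1)) * (1 - q ^ (6 * m + 3)))
    * (1 - q ^ (3 * n)) * (1 - q ^ (2 * m + 1 + n)) * qPoch (q ^ (2 * m)) q n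
    * qPoch (q ^ 2 * (q ^ (2 * m))⁻¹) (q ^ 2) (n - 1)
    / (qPoch (q ^ (4 * m + 1)) (q ^ 2) (n + 1) * qPoch (q ^ 3) (q ^ 3) n)
    * (-1 : ℂ) ^ n * q ^ (n.choose 2 + n + 2 * m * n)

lemma S_eq_tsum_T (q : ℂ) (M : ℕ) : S q M = ∑' n, T q M n := rfl

lemma qPoch_zero (a q : ℂ) : qPoch a q 0 = 1 := by simp [qPoch]

lemma qPoch_one (a q : ℂ) : qPoch a q 1 = 1 - a := by simp [qPoch]

lemma qPoch_succ (a q : ℂ) (n : ℕ) :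
    qPoch a q (n+1) = qPoch a q n * (1 - a * q ^ n) := by
  simp [qPoch, Finset.prod_range_succ]

lemma qPoch_two (a q : ℂ) : qPoch a q 2 = (1 - a) * (1 - a * q) := by
  rw [show (2:ℕ) = 1 + 1 from rfl, qPoch_succ, qPoch_one, pow_one]

lemma qPoch_succ' (a q : ℂ) (n : ℕ) :
    qPoch a q (n+1) = (1 - a) * qPoch (a * q) q n := by
  rw [qPoch, Finset.prod_range_succ']
  simp only [pow_zero, mul_one, qPoch]
  rw [mul_comm]
  congr 1
  refine Finset.prod_congr rfl fun k _ => ?_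
  ring

lemma qPoch_shift (a q : ℂ) (n : ℕ) :
    (1 - a) * qPoch (a * q) q n = qPoch a q n * (1 - a * q ^ n) := by
  rw [← qPoch_succ', qPoch_succ]

lemma qPoch_eq_zero {a q : ℂ} {j : ℕ} (n : ℕ) (hj : j < n) (h : 1 - a * q ^ j = 0) :
    qPoch a q n = 0 :=
  Finset.prod_eq_zero (Finset.mem_range.mpr hj) h

lemma qPoch_ne_zero {a q : ℂ} {n : ℕ} (h : ∀ j, j < n → 1 - a * q ^ j ≠ 0) :
    qPoch a q n ≠ 0 :=
  Finset.prod_ne_zero_iff.mpr fun j hj => h j (Finset.mem_range.mp hj)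

section main
variable {q : ℂ}

lemma one_sub_pow_ne (hroot : ∀ n : ℕ, 1 ≤ n → q ^ n ≠ 1) (n : ℕ) (hn : 1 ≤ n) :
    (1 : ℂ) - q ^ n ≠ 0 :=
  sub_ne_zero.mpr fun h => hroot n hn h.symm

lemma one_sub_ne' (hroot : ∀ n : ℕ, 1 ≤ n → q ^ n ≠ 1) (x : ℂ) (e : ℕ) (he : 1 ≤ e)
    (hx : x = q ^ e) : 1 - x ≠ 0 := hx ▸ one_sub_pow_ne hroot e he

lemma qPoch_pow_ne_zero (hroot : ∀ n : ℕ, 1 ≤ n → q ^ n ≠ 1) (a b n : ℕ) (ha : 1 ≤ a) :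
    qPoch (q ^ a) (q ^ b) n ≠ 0 := by
  refine qPoch_ne_zero fun j _ => ?_
  rw [← pow_mul, ← pow_add]
  exact one_sub_pow_ne hroot _ (by omega)

/-- the factor `(q^{2-2m}; q^2)_n` vanishes for `n ≥ m ≥ 1`. -/
lemma qPoch_B_zero (hq0 : q ≠ 0) {m : ℕ} (hm : 1 ≤ m) {n : ℕ} (hn : m ≤ n) :
    qPoch (q ^ 2 * (q ^ (2 * m))⁻¹) (q ^ 2) n = 0 := by
  refine qPoch_eq_zero n (by omega : m - 1 < n) ?_
  have h1 : (q ^ 2 : ℂ) * (q ^ 2) ^ (m - 1) = q ^ (2 * m) := by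
    rw [← pow_succ', show m - 1 + 1 = m by omega, ← pow_mul]
  have : (q ^ 2 : ℂ) * (q ^ (2 * m))⁻¹ * (q ^ 2) ^ (m - 1) = 1 := by
    rw [mul_right_comm, h1]
    exact mul_inv_cancel₀ (pow_ne_zero _ hq0)
  rw [this]
  ring

lemma T_vanish (hq0 : q ≠ 0) {M : ℕ} (hM : 1 ≤ M) {n : ℕ} (hn : M ≤ n) :
    T q M n = 0 := by
  rw [T, qPoch_B_zero hq0 hM hn]
  simp

lemma T_zero (q : ℂ) (M : ℕ) : T q M 0 = 1 := by
  simp [T, qPoch_zero]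

lemma S_zero_eq_one : S q 0 = 1 := by
  rw [S_eq_tsum_T, tsum_eq_single 0 ?_, T_zero]
  intro n hn
  have h : qPoch (q ^ (2 * 0)) q n = 0 := by
    refine qPoch_eq_zero n (Nat.pos_of_ne_zero hn) ?_
    simp
  rw [T, h]
  simp

lemma S_one_eq_one (hq0 : q ≠ 0) : S q 1 = 1 := by
  rw [S_eq_tsum_T, tsum_eq_single 0 ?_, T_zero]
  intro n hn
  exact T_vanish hq0 le_rfl (Nat.pos_of_ne_zero hn)

lemma S_eq_sum (hq0 : q ≠ 0) {M : ℕ} (hM : 1 ≤ M) {N : ℕ} (hN : M ≤ N) :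
    S q M = ∑ n ∈ Finset.range N, T q M n := by
  rw [S_eq_tsum_T]
  refine tsum_eq_sum fun n hn => T_vanish hq0 hM ?_
  have := Finset.mem_range.not.mp hn
  omega

end main

section key
variable {q : ℂ}

set_option maxHeartbeats 1000000 in
lemma key_zero (hq0 : q ≠ 0) (hroot : ∀ n : ℕ, 1 ≤ n → q ^ n ≠ 1) {m : ℕ} (hm : 1 ≤ m) :
    T q (m+1) 0 - ((1 - q ^ (4*m+1)) * (1 - q ^ (4*m+3)) / ((1 - q ^ (2*m+1)) * (1 - q ^ (6*m+3)))) * T q m 0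
    = Gfun q m 1 - Gfun q m 0 := by
  have hG0 : Gfun q m 0 = 0 := by
    simp [Gfun]
  rw [T_zero, T_zero, hG0, sub_zero]
  simp only [Gfun]
  norm_num [qPoch_zero, qPoch_one, qPoch_two]
  have h3 : (1:ℂ) - q^3 ≠ 0 := one_sub_pow_ne hroot 3 (by omega)
  have hP2 : (1:ℂ) - q^(2*m+1) ≠ 0 := one_sub_pow_ne hroot _ (by omega)
  have hP5 : (1:ℂ) - q^(6*m+3) ≠ 0 := one_sub_pow_ne hroot _ (by omega)
  have hc1 : (1:ℂ) - q^(4*m+1) ≠ 0 := one_sub_pow_ne hroot _ (by omega)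
  have hc2 : (1:ℂ) - q^(4*m+1)*q^2 ≠ 0 := one_sub_ne' hroot _ (4*m+3) (by omega) (by ring)
  field_simp
  ring
end key
section keysucc
variable {q : ℂ}

set_option maxHeartbeats 4000000 in
lemma key_succ (hq0 : q ≠ 0) (hroot : ∀ n : ℕ, 1 ≤ n → q ^ n ≠ 1) {m : ℕ} (hm : 1 ≤ m) (k : ℕ) :
    T q (m+1) (k+1) - ((1 - q ^ (4*m+1)) * (1 - q ^ (4*m+3)) / ((1 - q ^ (2*m+1)) * (1 - q ^ (6*m+3)))) * T q m (k+1)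
    = Gfun q m (k+1+1) - Gfun q m (k+1) := by
  -- nonvanishing facts
  have hP2 : (1:ℂ) - q^(2*m+1) ≠ 0 := one_sub_pow_ne hroot _ (by omega)
  have hP5 : (1:ℂ) - q^(6*m+3) ≠ 0 := one_sub_pow_ne hroot _ (by omega)
  have ha1 : (1:ℂ) - q^(2*m) ≠ 0 := one_sub_pow_ne hroot _ (by omega)
  have ha2 : (1:ℂ) - q^(2*m)*q ≠ 0 := one_sub_ne' hroot _ (2*m+1) (by omega) (by ring)
  have hc1 : (1:ℂ) - q^(4*m+1) ≠ 0 := one_sub_pow_ne hroot _ (by omega)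
  have hc2 : (1:ℂ) - q^(4*m+1)*q^2 ≠ 0 := one_sub_ne' hroot _ (4*m+3) (by omega) (by ring)
  have hc3 : (1:ℂ) - q^(4*m+1)*(q^2)^(k+1) ≠ 0 := one_sub_ne' hroot _ (4*m+2*k+3) (by omega) (by ring)
  have hc4 : (1:ℂ) - q^(4*m+1)*q^2*(q^2)^(k+1) ≠ 0 := one_sub_ne' hroot _ (4*m+2*k+5) (by omega) (by ring)
  have hd3 : (1:ℂ) - q^3*(q^3)^(k+1) ≠ 0 := one_sub_ne' hroot _ (3*k+6) (by omega) (by ring)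
  have hq2m : (q:ℂ)^(2*m) ≠ 0 := pow_ne_zero _ hq0
  have hCne : qPoch (q^(4*m+1)) (q^2) (k+1) ≠ 0 := qPoch_pow_ne_zero hroot _ _ _ (by omega)
  have hC'ne : qPoch (q^(4*(m+1)+1)) (q^2) (k+1) ≠ 0 := qPoch_pow_ne_zero hroot _ _ _ (by omega)
  have hC2ne : qPoch (q^(4*m+1)) (q^2) (k+1+1) ≠ 0 := qPoch_pow_ne_zero hroot _ _ _ (by omega)
  have hC3ne : qPoch (q^(4*m+1)) (q^2) (k+1+1+1) ≠ 0 := qPoch_pow_ne_zero hroot _ _ _ (by omega)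
  have hDne : qPoch (q^3) (q^3) (k+1) ≠ 0 := qPoch_pow_ne_zero hroot _ _ _ (by omega)
  have hD2ne : qPoch (q^3) (q^3) (k+1+1) ≠ 0 := qPoch_pow_ne_zero hroot _ _ _ (by omega)
  -- choose identity
  have hch : (k+1+1).choose 2 = (k+1).choose 2 + (k+1) := by
    rw [Nat.choose_two_right, Nat.choose_two_right, Nat.add_sub_cancel, Nat.add_sub_cancel]
    obtain ⟨t, ht⟩ := Nat.even_mul_succ_self k
    have h1 : (k+1+1)*(k+1) = k*(k+1) + 2*(k+1) := by ring
    have h2 : (k+1)*k = k*(k+1) := Nat.mul_comm _ _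
    omega
  -- shift identities
  have e1 : (1 - q^(2*m)) * qPoch (q^(2*m) * q) q (k+1)
      = qPoch (q^(2*m)) q (k+1) * (1 - q^(2*m) * q^(k+1)) := qPoch_shift _ _ _
  have e2 : (1 - q^(2*m)*q) * qPoch ((q^(2*m) * q) * q) q (k+1)
      = qPoch (q^(2*m)*q) q (k+1) * (1 - (q^(2*m)*q) * q^(k+1)) := qPoch_shift _ _ _
  have hA' : qPoch (q^(2*(m+1))) q (k+1) * ((1 - q^(2*m)) * (1 - q^(2*m)*q))
      = qPoch (q^(2*m)) q (k+1) * ((1 - q^(2*m) * q^(k+1)) * (1 - q^(2*m) * q * q^(k+1))) := by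
    rw [show (q:ℂ)^(2*(m+1)) = q^(2*m)*q*q by rw [show 2*(m+1) = 2*m+1+1 by ring, pow_succ, pow_succ]]
    linear_combination (1 - q^(2*m)*q*q^(k+1)) * e1 + (1 - q^(2*m)) * e2
  have f1 : (1 - q^(4*m+1)) * qPoch (q^(4*m+1) * q^2) (q^2) (k+1)
      = qPoch (q^(4*m+1)) (q^2) (k+1) * (1 - q^(4*m+1) * (q^2)^(k+1)) := qPoch_shift _ _ _
  have f2 : (1 - q^(4*m+1)*q^2) * qPoch ((q^(4*m+1) * q^2) * q^2) (q^2) (k+1)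
      = qPoch (q^(4*m+1)*q^2) (q^2) (k+1) * (1 - (q^(4*m+1)*q^2) * (q^2)^(k+1)) := qPoch_shift _ _ _
  have hC' : qPoch (q^(4*(m+1)+1)) (q^2) (k+1) * ((1 - q^(4*m+1)) * (1 - q^(4*m+1)*q^2))
      = qPoch (q^(4*m+1)) (q^2) (k+1) * ((1 - q^(4*m+1) * (q^2)^(k+1)) * (1 - q^(4*m+1) * q^2 * (q^2)^(k+1))) := by
    rw [show (q:ℂ)^(4*(m+1)+1) = q^(4*m+1)*q^2*q^2 by rw [show 4*(m+1)+1 = 4*m+1+2+2 by ring, pow_add, pow_add]]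
    linear_combination (1 - q^(4*m+1)*q^2*(q^2)^(k+1)) * f1 + (1 - q^(4*m+1)) * f2
  have hB' : qPoch (q^2 * (q^(2*(m+1)))⁻¹) (q^2) (k+1)
      = (1 - q^2 * (q^(2*(m+1)))⁻¹) * qPoch (q^2 * (q^(2*m))⁻¹) (q^2) k := by
    rw [qPoch_succ']
    congr 2
    have h2 : (q:ℂ)^(2*(m+1)) ≠ 0 := pow_ne_zero _ hq0
    field_simp
    ring
  have hinv1 : (1 - q^2 * (q^(2*(m+1)))⁻¹) * q^(2*m) = q^(2*m) - 1 := by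
    have h2 : (q:ℂ)^(2*(m+1)) ≠ 0 := pow_ne_zero _ hq0
    field_simp
    ring
  have hinv2 : (1 - q^2 * (q^(2*m))⁻¹ * (q^2)^k) * q^(2*m) = q^(2*m) - q^2*(q^2)^k := by
    field_simp
  have hβ : ((1 - q^(4*m+1)) * (1 - q^(4*m+3)) / ((1 - q^(2*m+1)) * (1 - q^(6*m+3))))
      * ((1 - q^(2*m+1)) * (1 - q^(6*m+3))) = (1 - q^(4*m+1)) * (1 - q^(4*m+3)) :=
    div_mul_cancel₀ _ (mul_ne_zero hP2 hP5)
  -- raw denominator-clearing for the four terms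
  have h01 : T q (m+1) (k+1) * (qPoch (q^(4*(m+1)+1)) (q^2) (k+1) * qPoch (q^3) (q^3) (k+1))
      = qPoch (q^(2*(m+1))) q (k+1) * qPoch (q^2 * (q^(2*(m+1)))⁻¹) (q^2) (k+1)
        * (-1:ℂ)^(k+1) * q^((k+1).choose 2 + (k+1) + 2*(m+1)*(k+1)) := by
    simp only [T]
    rw [div_mul_eq_mul_div, div_mul_eq_mul_div, div_mul_cancel₀ _ (mul_ne_zero hC'ne hDne)]
  have h02 : T q m (k+1) * (qPoch (q^(4*m+1)) (q^2) (k+1) * qPoch (q^3) (q^3) (k+1))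
      = qPoch (q^(2*m)) q (k+1) * qPoch (q^2 * (q^(2*m))⁻¹) (q^2) (k+1)
        * (-1:ℂ)^(k+1) * q^((k+1).choose 2 + (k+1) + 2*m*(k+1)) := by
    simp only [T]
    rw [div_mul_eq_mul_div, div_mul_eq_mul_div, div_mul_cancel₀ _ (mul_ne_zero hCne hDne)]
  have h03 : Gfun q m (k+1) * (qPoch (q^(4*m+1)) (q^2) (k+1+1) * qPoch (q^3) (q^3) (k+1))
      = (1 - q^(4*m+1)) * (1 - q^(4*m+3)) / ((1 - q^(2*m+1)) * (1 - q^(6*m+3)))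
        * (1 - q^(3*(k+1))) * (1 - q^(2*m+1+(k+1))) * qPoch (q^(2*m)) q (k+1)
        * qPoch (q^2 * (q^(2*m))⁻¹) (q^2) k
        * (-1:ℂ)^(k+1) * q^((k+1).choose 2 + (k+1) + 2*m*(k+1)) := by
    simp only [Gfun, Nat.add_sub_cancel]
    rw [div_mul_eq_mul_div, div_mul_eq_mul_div, div_mul_cancel₀ _ (mul_ne_zero hC2ne hDne)]
  have h04 : Gfun q m (k+1+1) * (qPoch (q^(4*m+1)) (q^2) (k+1+1+1) * qPoch (q^3) (q^3) (k+1+1))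
      = (1 - q^(4*m+1)) * (1 - q^(4*m+3)) / ((1 - q^(2*m+1)) * (1 - q^(6*m+3)))
        * (1 - q^(3*(k+1+1))) * (1 - q^(2*m+1+(k+1+1))) * qPoch (q^(2*m)) q (k+1+1)
        * qPoch (q^2 * (q^(2*m))⁻¹) (q^2) (k+1)
        * (-1:ℂ)^(k+1+1) * q^((k+1+1).choose 2 + (k+1+1) + 2*m*(k+1+1)) := by
    simp only [Gfun, Nat.add_sub_cancel]
    rw [div_mul_eq_mul_div, div_mul_eq_mul_div, div_mul_cancel₀ _ (mul_ne_zero hC3ne hD2ne)]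
  -- expand successor qPochs in h02, h03, h04
  rw [qPoch_succ (q^2 * (q^(2*m))⁻¹) (q^2) k] at h02
  rw [qPoch_succ (q^(4*m+1)) (q^2) (k+1)] at h03
  rw [qPoch_succ (q^(2*m)) q (k+1), qPoch_succ (q^2 * (q^(2*m))⁻¹) (q^2) k,
      qPoch_succ (q^(4*m+1)) (q^2) (k+1+1), qPoch_succ (q^(4*m+1)) (q^2) (k+1),
      qPoch_succ (q^3) (q^3) (k+1), hch] at h04
  -- reduced product-form equations
  have hX1 : T q (m+1) (k+1) * (qPoch (q^(4*m+1)) (q^2) (k+1) * qPoch (q^3) (q^3) (k+1)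
        * (1 - q^(2*m)) * (1 - q^(2*m)*q) * q^(2*m)
        * (1 - q^(4*m+1)*(q^2)^(k+1)) * (1 - q^(4*m+1)*q^2*(q^2)^(k+1)))
      = qPoch (q^(2*m)) q (k+1) * ((1 - q^(2*m) * q^(k+1)) * (1 - q^(2*m) * q * q^(k+1)))
        * (q^(2*m) - 1) * qPoch (q^2 * (q^(2*m))⁻¹) (q^2) k
        * (-1:ℂ)^(k+1) * q^((k+1).choose 2 + (k+1) + 2*(m+1)*(k+1))
        * ((1 - q^(4*m+1)) * (1 - q^(4*m+1)*q^2)) := by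
    linear_combination
      ((1 - q^(2*m)) * (1 - q^(2*m)*q) * q^(2*m) * (1 - q^(4*m+1)) * (1 - q^(4*m+1)*q^2)) * h01
      - (T q (m+1) (k+1) * qPoch (q^3) (q^3) (k+1) * (1 - q^(2*m)) * (1 - q^(2*m)*q) * q^(2*m)) * hC'
      + (qPoch (q^2 * (q^(2*(m+1)))⁻¹) (q^2) (k+1) * q^(2*m)
          * (-1:ℂ)^(k+1) * q^((k+1).choose 2 + (k+1) + 2*(m+1)*(k+1))
          * (1 - q^(4*m+1)) * (1 - q^(4*m+1)*q^2)) * hA'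
      + (qPoch (q^(2*m)) q (k+1) * ((1 - q^(2*m) * q^(k+1)) * (1 - q^(2*m) * q * q^(k+1)))
          * q^(2*m) * (-1:ℂ)^(k+1) * q^((k+1).choose 2 + (k+1) + 2*(m+1)*(k+1))
          * (1 - q^(4*m+1)) * (1 - q^(4*m+1)*q^2)) * hB'
      + (qPoch (q^(2*m)) q (k+1) * ((1 - q^(2*m) * q^(k+1)) * (1 - q^(2*m) * q * q^(k+1)))
          * qPoch (q^2 * (q^(2*m))⁻¹) (q^2) k
          * (-1:ℂ)^(k+1) * q^((k+1).choose 2 + (k+1) + 2*(m+1)*(k+1))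
          * (1 - q^(4*m+1)) * (1 - q^(4*m+1)*q^2)) * hinv1
  have hX2 : ((1 - q^(4*m+1)) * (1 - q^(4*m+3)) / ((1 - q^(2*m+1)) * (1 - q^(6*m+3)))) * T q m (k+1)
        * (qPoch (q^(4*m+1)) (q^2) (k+1) * qPoch (q^3) (q^3) (k+1) * q^(2*m)
          * ((1 - q^(2*m+1)) * (1 - q^(6*m+3))))
      = (1 - q^(4*m+1)) * (1 - q^(4*m+3)) * qPoch (q^(2*m)) q (k+1)
        * qPoch (q^2 * (q^(2*m))⁻¹) (q^2) k * (q^(2*m) - q^2*(q^2)^k)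
        * (-1:ℂ)^(k+1) * q^((k+1).choose 2 + (k+1) + 2*m*(k+1)) := by
    linear_combination
      (((1 - q^(4*m+1)) * (1 - q^(4*m+3)) / ((1 - q^(2*m+1)) * (1 - q^(6*m+3)))) * q^(2*m)
        * ((1 - q^(2*m+1)) * (1 - q^(6*m+3)))) * h02
      + (((1 - q^(4*m+1)) * (1 - q^(4*m+3)) / ((1 - q^(2*m+1)) * (1 - q^(6*m+3))))
          * qPoch (q^(2*m)) q (k+1) * qPoch (q^2 * (q^(2*m))⁻¹) (q^2) k
          * (-1:ℂ)^(k+1) * q^((k+1).choose 2 + (k+1) + 2*m*(k+1))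
          * ((1 - q^(2*m+1)) * (1 - q^(6*m+3)))) * hinv2
      + (qPoch (q^(2*m)) q (k+1) * qPoch (q^2 * (q^(2*m))⁻¹) (q^2) k * (q^(2*m) - q^2*(q^2)^k)
          * (-1:ℂ)^(k+1) * q^((k+1).choose 2 + (k+1) + 2*m*(k+1))) * hβ
  have hX3 : Gfun q m (k+1) * (qPoch (q^(4*m+1)) (q^2) (k+1)
        * (1 - q^(4*m+1)*(q^2)^(k+1)) * qPoch (q^3) (q^3) (k+1)
        * ((1 - q^(2*m+1)) * (1 - q^(6*m+3))))
      = (1 - q^(4*m+1)) * (1 - q^(4*m+3))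
        * (1 - q^(3*(k+1))) * (1 - q^(2*m+1+(k+1))) * qPoch (q^(2*m)) q (k+1)
        * qPoch (q^2 * (q^(2*m))⁻¹) (q^2) k
        * (-1:ℂ)^(k+1) * q^((k+1).choose 2 + (k+1) + 2*m*(k+1)) := by
    linear_combination (((1 - q^(2*m+1)) * (1 - q^(6*m+3)))) * h03
      + ((1 - q^(3*(k+1))) * (1 - q^(2*m+1+(k+1))) * qPoch (q^(2*m)) q (k+1)
          * qPoch (q^2 * (q^(2*m))⁻¹) (q^2) k
          * (-1:ℂ)^(k+1) * q^((k+1).choose 2 + (k+1) + 2*m*(k+1))) * hβ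
  have hX4 : Gfun q m (k+1+1) * (qPoch (q^(4*m+1)) (q^2) (k+1)
        * (1 - q^(4*m+1)*(q^2)^(k+1)) * (1 - q^(4*m+1)*(q^2)^(k+1+1))
        * qPoch (q^3) (q^3) (k+1) * (1 - q^3*(q^3)^(k+1)) * q^(2*m)
        * ((1 - q^(2*m+1)) * (1 - q^(6*m+3))))
      = (1 - q^(4*m+1)) * (1 - q^(4*m+3))
        * (1 - q^(3*(k+1+1))) * (1 - q^(2*m+1+(k+1+1)))
        * qPoch (q^(2*m)) q (k+1) * (1 - q^(2*m) * q^(k+1))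
        * qPoch (q^2 * (q^(2*m))⁻¹) (q^2) k * (q^(2*m) - q^2*(q^2)^k)
        * (-1:ℂ)^(k+1+1) * q^((k+1).choose 2 + (k+1) + (k+1+1) + 2*m*(k+1+1)) := by
    linear_combination (q^(2*m) * ((1 - q^(2*m+1)) * (1 - q^(6*m+3)))) * h04
      + (((1 - q^(4*m+1)) * (1 - q^(4*m+3)) / ((1 - q^(2*m+1)) * (1 - q^(6*m+3))))
          * (1 - q^(3*(k+1+1))) * (1 - q^(2*m+1+(k+1+1)))
          * qPoch (q^(2*m)) q (k+1) * (1 - q^(2*m) * q^(k+1))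
          * qPoch (q^2 * (q^(2*m))⁻¹) (q^2) k
          * (-1:ℂ)^(k+1+1) * q^((k+1).choose 2 + (k+1) + (k+1+1) + 2*m*(k+1+1))
          * ((1 - q^(2*m+1)) * (1 - q^(6*m+3)))) * hinv2
      + ((1 - q^(3*(k+1+1))) * (1 - q^(2*m+1+(k+1+1)))
          * qPoch (q^(2*m)) q (k+1) * (1 - q^(2*m) * q^(k+1))
          * qPoch (q^2 * (q^(2*m))⁻¹) (q^2) k * (q^(2*m) - q^2*(q^2)^k)
          * (-1:ℂ)^(k+1+1) * q^((k+1).choose 2 + (k+1) + (k+1+1) + 2*m*(k+1+1))) * hβ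
  -- final assembly
  have hZ : qPoch (q^(4*m+1)) (q^2) (k+1) * qPoch (q^3) (q^3) (k+1)
      * (1 - q^(2*m)) * (1 - q^(2*m)*q) * (1 - q^(4*m+1)) * (1 - q^(4*m+1)*q^2)
      * (1 - q^(4*m+1)*(q^2)^(k+1)) * (1 - q^(4*m+1)*q^2*(q^2)^(k+1))
      * (1 - q^3*(q^3)^(k+1)) * (1 - q^(2*m+1)) * (1 - q^(6*m+3)) * q^(2*m) ≠ 0 := by
    apply_rules [mul_ne_zero]
  apply mul_right_cancel₀ hZ
  have hc4' : (1:ℂ) - q^(4*m+1)*(q^2)^(k+1+1) = 1 - q^(4*m+1)*q^2*(q^2)^(k+1) := by ring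
  rw [hc4'] at hX4
  linear_combination
    ((1 - q^(4*m+1)) * (1 - q^(4*m+1)*q^2) * (1 - q^3*(q^3)^(k+1))
      * (1 - q^(2*m+1)) * (1 - q^(6*m+3))) * hX1
    - ((1 - q^(2*m)) * (1 - q^(2*m)*q) * (1 - q^(4*m+1)) * (1 - q^(4*m+1)*q^2)
      * (1 - q^(4*m+1)*(q^2)^(k+1)) * (1 - q^(4*m+1)*q^2*(q^2)^(k+1)) * (1 - q^3*(q^3)^(k+1))) * hX2
    - ((1 - q^(2*m)) * (1 - q^(2*m)*q) * (1 - q^(4*m+1)) * (1 - q^(4*m+1)*q^2)) * hX4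
    + ((1 - q^(2*m)) * (1 - q^(2*m)*q) * (1 - q^(4*m+1)) * (1 - q^(4*m+1)*q^2)
      * (1 - q^(4*m+1)*q^2*(q^2)^(k+1)) * (1 - q^3*(q^3)^(k+1)) * q^(2*m)) * hX3

end keysucc

section assemble
variable {q : ℂ}

lemma Gfun_zero (m : ℕ) : Gfun q m 0 = 0 := by simp [Gfun]

lemma Gfun_top (hq0 : q ≠ 0) {m : ℕ} (hm : 1 ≤ m) : Gfun q m (m+1+1) = 0 := by
  rw [Gfun, show m+1+1-1 = m+1 from rfl, qPoch_B_zero hq0 hm (by omega)]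
  simp

lemma S_step (hq0 : q ≠ 0) (hroot : ∀ n : ℕ, 1 ≤ n → q ^ n ≠ 1) {m : ℕ} (hm : 1 ≤ m) :
    S q (m+1) = ((1 - q ^ (4*m+1)) * (1 - q ^ (4*m+3)) / ((1 - q ^ (2*m+1)) * (1 - q ^ (6*m+3)))) * S q m := by
  have hSM : S q (m+1) = ∑ n ∈ Finset.range (m+1+1), T q (m+1) n := S_eq_sum hq0 (by omega) (by omega)
  have hSm : S q m = ∑ n ∈ Finset.range (m+1+1), T q m n := S_eq_sum hq0 hm (by omega)
  have htel : ∑ n ∈ Finset.range (m+1+1),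
      (T q (m+1) n - ((1 - q ^ (4*m+1)) * (1 - q ^ (4*m+3)) / ((1 - q ^ (2*m+1)) * (1 - q ^ (6*m+3)))) * T q m n)
      = 0 := by
    have h1 : ∀ n ∈ Finset.range (m+1+1),
        T q (m+1) n - ((1 - q ^ (4*m+1)) * (1 - q ^ (4*m+3)) / ((1 - q ^ (2*m+1)) * (1 - q ^ (6*m+3)))) * T q m n
        = Gfun q m (n+1) - Gfun q m n := by
      intro n _
      cases n with
      | zero => exact key_zero hq0 hroot hm
      | succ k => exact key_succ hq0 hroot hm k
    rw [Finset.sum_congr rfl h1, Finset.sum_range_sub (Gfun q m) (m+1+1),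
      Gfun_top hq0 hm, Gfun_zero, sub_zero]
  rw [Finset.sum_sub_distrib, ← Finset.mul_sum] at htel
  rw [hSM, hSm]
  linear_combination htel

lemma S_ne_zero (hq0 : q ≠ 0) (hroot : ∀ n : ℕ, 1 ≤ n → q ^ n ≠ 1) : ∀ M : ℕ, S q M ≠ 0
  | 0 => by rw [S_zero_eq_one]; exact one_ne_zero
  | (M+1) => by
    rcases Nat.eq_zero_or_pos M with rfl | hM
    · rw [S_one_eq_one hq0]; exact one_ne_zero
    · rw [S_step hq0 hroot hM]
      exact mul_ne_zero
        (div_ne_zero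
          (mul_ne_zero (one_sub_pow_ne hroot _ (by omega)) (one_sub_pow_ne hroot _ (by omega)))
          (mul_ne_zero (one_sub_pow_ne hroot _ (by omega)) (one_sub_pow_ne hroot _ (by omega))))
        (S_ne_zero hq0 hroot M)

lemma S_q0 (N : ℕ) : S (0:ℂ) N = 1 := by
  rw [S_eq_tsum_T, tsum_eq_single 0 ?_, T_zero]
  intro n hn
  have h : (0:ℂ) ^ (n.choose 2 + n + 2*N*n) = 0 :=
    zero_pow (by have := Nat.pos_of_ne_zero hn; omega)
  rw [T, h, mul_zero]

end assemble

theorem stmt5 (q : ℂ) (hq : ‖q‖ < 1)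
    (hroot : ∀ n : ℕ, 1 ≤ n → q ^ n ≠ 1) (M : ℕ) (hM : 1 ≤ M) :
    S q M / S q (M - 1)
    = (1 - q ^ (4 * M - 3)) * (1 - q ^ (4 * M - 1))
      / ((1 - q ^ (2 * M - 1)) * (1 - q ^ (6 * M - 3))) := by
  by_cases hq0 : q = 0
  · subst hq0
    rw [S_q0, S_q0, zero_pow (by omega : 4*M-3 ≠ 0), zero_pow (by omega : 4*M-1 ≠ 0),
      zero_pow (by omega : 2*M-1 ≠ 0), zero_pow (by omega : 6*M-3 ≠ 0)]
    norm_num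
  · obtain ⟨m, rfl⟩ : ∃ m, M = m + 1 := ⟨M - 1, by omega⟩
    rcases Nat.eq_zero_or_pos m with rfl | hm
    · rw [show (0:ℕ)+1-1 = 0 from rfl, S_one_eq_one hq0, S_zero_eq_one]
      have h1' : (1:ℂ) - q ≠ 0 := by
        have := one_sub_pow_ne hroot 1 le_rfl
        rwa [pow_one] at this
      have h3' : (1:ℂ) - q^3 ≠ 0 := one_sub_pow_ne hroot 3 (by omega)
      norm_num
      rw [div_self (mul_ne_zero h1' h3')]
    · rw [show 4*(m+1)-3 = 4*m+1 by omega, show 4*(m+1)-1 = 4*m+3 by omega,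
        show 2*(m+1)-1 = 2*m+1 by omega, show 6*(m+1)-3 = 6*m+3 by omega,
        Nat.add_sub_cancel, S_step hq0 hroot hm, mul_div_assoc,
        div_self (S_ne_zero hq0 hroot m), mul_one]
end

section
/- For |q| < 1, one has ∑_{n≥0} q^{n^2+n} (-q;q^2)_n / (q^2;q^2)_n = 1 / ((q^2;q^8)_∞ (q^3;q^8)_∞ (q^7;q^8)_∞). -/
open Finset Filter Topology

set_option maxHeartbeats 1000000

namespace QG


lemma qPoch_succ (a q : ℂ) (n : ℕ) : qPoch a q (n + 1) = qPoch a q n * (1 - a * q ^ n) :=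
  Finset.prod_range_succ _ _

lemma qPoch_zero (a q : ℂ) : qPoch a q 0 = 1 := Finset.prod_range_zero _

lemma weier (s : Finset ℕ) (u : ℕ → ℝ) (h0 : ∀ k ∈ s, 0 ≤ u k) (h1 : ∀ k ∈ s, u k ≤ 1) :
    1 - ∑ k ∈ s, u k ≤ ∏ k ∈ s, (1 - u k) := by
  induction s using Finset.cons_induction with
  | empty => simp
  | cons a s ha ih =>
    rw [Finset.prod_cons, Finset.sum_cons]
    have h0' : ∀ k ∈ s, 0 ≤ u k := fun k hk => h0 k (Finset.mem_cons_of_mem hk)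
    have h1' : ∀ k ∈ s, u k ≤ 1 := fun k hk => h1 k (Finset.mem_cons_of_mem hk)
    have ih' := ih h0' h1'
    have hs0 : 0 ≤ ∑ k ∈ s, u k := Finset.sum_nonneg h0'
    have hua : 0 ≤ u a := h0 a (Finset.mem_cons_self a s)
    have hua1 : u a ≤ 1 := h1 a (Finset.mem_cons_self a s)
    have hmul := mul_le_mul_of_nonneg_left ih' (sub_nonneg.2 hua1)
    nlinarith

lemma prod_lower (u : ℕ → ℝ) (h0 : ∀ k, 0 ≤ u k) (h1 : ∀ k, u k < 1) (hs : Summable u) :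
    ∃ c : ℝ, 0 < c ∧ ∀ s : Finset ℕ, c ≤ ∏ k ∈ s, (1 - u k) := by
  have htail : Tendsto (fun N => ∑' k, u (k + N)) atTop (𝓝 0) := tendsto_sum_nat_add u
  have hev : ∀ᶠ N in atTop, ∑' k, u (k + N) < 1 / 2 :=
    htail.eventually (eventually_lt_nhds (by norm_num))
  obtain ⟨N, hN⟩ := hev.exists
  refine ⟨(∏ k ∈ range N, (1 - u k)) * (1 / 2), ?_, ?_⟩
  · apply mul_pos _ (by norm_num)
    exact Finset.prod_pos fun k _ => by linarith [h1 k]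
  · intro s
    have hsplit := Finset.prod_filter_mul_prod_filter_not s (fun k => k < N) (fun k => 1 - u k)
    rw [← hsplit]
    have hsub : s.filter (fun k => k < N) ⊆ range N := by
      intro k hk
      simp only [Finset.mem_filter] at hk
      exact Finset.mem_range.2 hk.2
    have hb1 : ∏ k ∈ range N, (1 - u k) ≤ ∏ k ∈ s.filter (fun k => k < N), (1 - u k) := by
      rw [← Finset.prod_sdiff hsub]
      have h1le : ∏ k ∈ range N \ s.filter (fun k => k < N), (1 - u k) ≤ 1 :=
        Finset.prod_le_one (fun k _ => by linarith [h1 k]) (fun k _ => by linarith [h0 k])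
      have hnn : 0 ≤ ∏ k ∈ s.filter (fun k => k < N), (1 - u k) :=
        Finset.prod_nonneg fun k _ => by linarith [h1 k]
      nlinarith [Finset.prod_nonneg (fun k (_ : k ∈ range N \ s.filter (fun k => k < N)) => by linarith [h1 k] : ∀ k ∈ range N \ s.filter (fun k => k < N), 0 ≤ 1 - u k)]
    have hb2 : (1:ℝ) / 2 ≤ ∏ k ∈ s.filter (fun k => ¬ k < N), (1 - u k) := by
      set t := s.filter (fun k => ¬ k < N) with ht
      have hsum : ∑ k ∈ t, u k ≤ 1 / 2 := by
        have hinj : ∀ x ∈ t, ∀ y ∈ t, x - N = y - N → x = y := by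
          intro x hx y hy hxy
          simp only [ht, Finset.mem_filter, not_lt] at hx hy
          omega
        have himg : ∑ j ∈ t.image (· - N), u (j + N) = ∑ k ∈ t, u k := by
          rw [Finset.sum_image hinj]
          apply Finset.sum_congr rfl
          intro x hx
          simp only [ht, Finset.mem_filter, not_lt] at hx
          congr 1
          omega
        have hsummable : Summable (fun j => u (j + N)) := (summable_nat_add_iff N).2 hs
        have hle : ∑ j ∈ t.image (· - N), u (j + N) ≤ ∑' j, u (j + N) :=
          Summable.sum_le_tsum _ (fun j _ => h0 _) hsummable
        linarith [himg ▸ hle]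
      have := weier t u (fun k _ => h0 k) (fun k _ => (h1 k).le)
      linarith
    have hnn1 : (0:ℝ) ≤ ∏ k ∈ range N, (1 - u k) :=
      Finset.prod_nonneg fun k _ => by linarith [h1 k]
    exact mul_le_mul hb1 hb2 (by norm_num) (le_trans hnn1 hb1)

section
variable {a Q : ℂ}

lemma factor_norm_lt (ha : ‖a‖ < 1) (hQ : ‖Q‖ < 1) (k : ℕ) : ‖a * Q ^ k‖ < 1 := by
  rw [norm_mul, norm_pow]
  calc ‖a‖ * ‖Q‖ ^ k ≤ ‖a‖ * 1 := by
        apply mul_le_mul_of_nonneg_left _ (norm_nonneg a)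
        exact pow_le_one₀ (norm_nonneg Q) hQ.le
    _ = ‖a‖ := mul_one _
    _ < 1 := ha

lemma factor_ne (ha : ‖a‖ < 1) (hQ : ‖Q‖ < 1) (k : ℕ) : (1 : ℂ) - a * Q ^ k ≠ 0 := by
  intro h
  have h2 : (1 : ℂ) = a * Q ^ k := by linear_combination h
  have := factor_norm_lt ha hQ k
  rw [← h2] at this
  simp at this

lemma qPoch_ne_zero (ha : ‖a‖ < 1) (hQ : ‖Q‖ < 1) (n : ℕ) : qPoch a Q n ≠ 0 :=
  Finset.prod_ne_zero_iff.2 fun k _ => factor_ne ha hQ k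

lemma summable_u (ha : ‖a‖ < 1) (hQ : ‖Q‖ < 1) : Summable (fun k : ℕ => ‖a‖ * ‖Q‖ ^ k) :=
  (summable_geometric_of_lt_one (norm_nonneg Q) hQ).mul_left _

lemma qPoch_lower (ha : ‖a‖ < 1) (hQ : ‖Q‖ < 1) :
    ∃ c : ℝ, 0 < c ∧ ∀ s : Finset ℕ, c ≤ ‖∏ k ∈ s, (1 - a * Q ^ k)‖ := by
  have h0 : ∀ k : ℕ, 0 ≤ ‖a‖ * ‖Q‖ ^ k := fun k =>
    mul_nonneg (norm_nonneg a) (pow_nonneg (norm_nonneg Q) k)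
  have h1 : ∀ k : ℕ, ‖a‖ * ‖Q‖ ^ k < 1 := fun k => by
    have := factor_norm_lt ha hQ k; rwa [norm_mul, norm_pow] at this
  obtain ⟨c, hc, hcs⟩ := prod_lower _ h0 h1 (summable_u ha hQ)
  refine ⟨c, hc, fun s => le_trans (hcs s) ?_⟩
  rw [norm_prod]
  apply Finset.prod_le_prod (fun k _ => by linarith [h1 k])
  intro k _
  have := norm_sub_norm_le (1 : ℂ) (a * Q ^ k)
  rw [norm_one, norm_mul, norm_pow] at this
  linarith

lemma multipliable_qPoch (ha : ‖a‖ < 1) (hQ : ‖Q‖ < 1) :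
    Multipliable (fun k : ℕ => 1 - a * Q ^ k) := by
  apply Complex.multipliable_of_summable_log (f := fun k : ℕ => 1 - a * Q ^ k)
  apply Summable.of_norm_bounded (g := fun k => ((1 - ‖a‖)⁻¹ / 2 + 1) * (‖a‖ * ‖Q‖ ^ k))
    (((summable_u ha hQ)).mul_left _)
  intro k
  have hz : ‖-(a * Q ^ k)‖ < 1 := by rw [norm_neg]; exact factor_norm_lt ha hQ k
  have hlog := Complex.norm_log_one_add_le hz
  have h1 : (1 : ℂ) - a * Q ^ k = 1 + -(a * Q ^ k) := by ring
  show ‖Complex.log (1 - a * Q ^ k)‖ ≤ _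
  rw [h1]
  refine le_trans hlog ?_
  rw [norm_neg, norm_mul, norm_pow]
  set r := ‖a‖ * ‖Q‖ ^ k with hr
  have hr0 : 0 ≤ r := mul_nonneg (norm_nonneg a) (pow_nonneg (norm_nonneg Q) k)
  have hra : r ≤ ‖a‖ := by
    rw [hr]
    calc ‖a‖ * ‖Q‖ ^ k ≤ ‖a‖ * 1 :=
          mul_le_mul_of_nonneg_left (pow_le_one₀ (norm_nonneg Q) hQ.le) (norm_nonneg a)
      _ = ‖a‖ := mul_one _
  have ha1 : (0:ℝ) < 1 - ‖a‖ := by linarith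
  have hinv : (1 - r)⁻¹ ≤ (1 - ‖a‖)⁻¹ := by
    apply inv_anti₀ ha1
    linarith
  have hinvpos : (0:ℝ) ≤ (1 - r)⁻¹ := inv_nonneg.2 (by nlinarith [hra, ha.le])
  have hr1 : r ≤ 1 := le_trans hra ha.le
  calc r ^ 2 * (1 - r)⁻¹ / 2 + r ≤ r * (1 - ‖a‖)⁻¹ / 2 + r := by
        have key : r * (1 - r)⁻¹ ≤ (1 - ‖a‖)⁻¹ := by
          calc r * (1 - r)⁻¹ ≤ 1 * (1 - ‖a‖)⁻¹ := mul_le_mul hr1 hinv hinvpos zero_le_one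
            _ = (1 - ‖a‖)⁻¹ := one_mul _
        have key2 := mul_le_mul_of_nonneg_left key hr0
        have : r ^ 2 * (1 - r)⁻¹ ≤ r * (1 - ‖a‖)⁻¹ := by
          calc r ^ 2 * (1 - r)⁻¹ = r * (r * (1 - r)⁻¹) := by ring
            _ ≤ r * (1 - ‖a‖)⁻¹ := key2
        linarith
    _ = ((1 - ‖a‖)⁻¹ / 2 + 1) * r := by ring

lemma hasProd_qPochInf (ha : ‖a‖ < 1) (hQ : ‖Q‖ < 1) :
    HasProd (fun k : ℕ => 1 - a * Q ^ k) (qPochInf a Q) :=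
  (multipliable_qPoch ha hQ).hasProd

lemma tendsto_qPoch (ha : ‖a‖ < 1) (hQ : ‖Q‖ < 1) :
    Tendsto (fun n => qPoch a Q n) atTop (𝓝 (qPochInf a Q)) :=
  (hasProd_qPochInf ha hQ).tendsto_prod_nat

lemma qPochInf_norm_lb (ha : ‖a‖ < 1) (hQ : ‖Q‖ < 1) :
    ∃ c : ℝ, 0 < c ∧ c ≤ ‖qPochInf a Q‖ ∧ ∀ n, c ≤ ‖qPoch a Q n‖ := by
  obtain ⟨c, hc, hcs⟩ := qPoch_lower ha hQ
  refine ⟨c, hc, ?_, fun n => hcs (range n)⟩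
  have hp := hasProd_qPochInf ha hQ
  have hn : Tendsto (fun s : Finset ℕ => ‖∏ k ∈ s, (1 - a * Q ^ k)‖) atTop
      (𝓝 ‖qPochInf a Q‖) := (continuous_norm.tendsto _).comp hp
  exact ge_of_tendsto' hn hcs

lemma qPochInf_ne_zero (ha : ‖a‖ < 1) (hQ : ‖Q‖ < 1) : qPochInf a Q ≠ 0 := by
  obtain ⟨c, hc, hle, _⟩ := qPochInf_norm_lb ha hQ
  intro h
  rw [h, norm_zero] at hle
  linarith

end

lemma Tlem (m : ℕ) : m * m = 2 * (∑ i ∈ range m, i) + m := by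
  induction m with
  | zero => simp
  | succ m ih =>
    rw [Finset.sum_range_succ]
    nlinarith [ih]

lemma euler {Q : ℂ} (hQ : ‖Q‖ < 1) {x : ℂ} (hx : ‖x‖ < 1) :
    ∑' m : ℕ, x ^ m * Q ^ (∑ i ∈ range m, i) / qPoch Q Q m = qPochInf (-x) Q := by
  obtain ⟨c, hc, _, hcn⟩ := qPochInf_norm_lb hQ hQ
  set T : ℕ → ℕ := fun m => ∑ i ∈ range m, i with hT
  have hterm : ∀ (y : ℂ) (m : ℕ), ‖y ^ m * Q ^ T m / qPoch Q Q m‖ ≤ ‖y‖ ^ m * c⁻¹ := by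
    intro y m
    rw [norm_div, norm_mul, norm_pow, norm_pow]
    have h1 : ‖Q‖ ^ T m ≤ 1 := pow_le_one₀ (norm_nonneg Q) hQ.le
    have h2 : c ≤ ‖qPoch Q Q m‖ := hcn m
    have h3 : 0 < ‖qPoch Q Q m‖ := lt_of_lt_of_le hc h2
    rw [div_le_iff₀ h3]
    have h4 : (1:ℝ) ≤ c⁻¹ * ‖qPoch Q Q m‖ := by
      rw [← inv_mul_cancel₀ hc.ne']
      exact mul_le_mul_of_nonneg_left h2 (inv_nonneg.2 hc.le)
    have h5 : (0:ℝ) ≤ ‖y‖ ^ m := pow_nonneg (norm_nonneg y) m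
    calc ‖y‖ ^ m * ‖Q‖ ^ T m ≤ ‖y‖ ^ m * 1 := mul_le_mul_of_nonneg_left h1 h5
      _ = ‖y‖ ^ m := mul_one _
      _ ≤ ‖y‖ ^ m * (c⁻¹ * ‖qPoch Q Q m‖) := le_mul_of_one_le_right h5 h4
      _ = ‖y‖ ^ m * c⁻¹ * ‖qPoch Q Q m‖ := by ring
  have hsum : ∀ y : ℂ, ‖y‖ < 1 → Summable (fun m => y ^ m * Q ^ T m / qPoch Q Q m) := by
    intro y hy
    exact Summable.of_norm_bounded
      (((summable_geometric_of_lt_one (norm_nonneg y) hy)).mul_right c⁻¹) (hterm y)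
  set E : ℂ → ℂ := fun y => ∑' m : ℕ, y ^ m * Q ^ T m / qPoch Q Q m with hE
  have hfe : ∀ y : ℂ, ‖y‖ < 1 → E y = (1 + y) * E (Q * y) := by
    intro y hy
    have hy2 : ‖Q * y‖ < 1 := by
      rw [norm_mul]
      nlinarith [norm_nonneg Q, norm_nonneg y]
    have hs1 := hsum y hy
    have hs2 := hsum (Q * y) hy2
    have hdiff : E y - E (Q * y)
        = ∑' m : ℕ, (y ^ m * Q ^ T m / qPoch Q Q m - (Q*y) ^ m * Q ^ T m / qPoch Q Q m) :=
      (Summable.tsum_sub hs1 hs2).symm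
    have hsd : Summable (fun m : ℕ =>
        y ^ m * Q ^ T m / qPoch Q Q m - (Q*y) ^ m * Q ^ T m / qPoch Q Q m) := hs1.sub hs2
    rw [Summable.tsum_eq_zero_add hsd] at hdiff
    have h0 : y ^ 0 * Q ^ T 0 / qPoch Q Q 0 - (Q*y) ^ 0 * Q ^ T 0 / qPoch Q Q 0 = 0 := by
      simp [qPoch_zero, hT]
    rw [h0, zero_add] at hdiff
    have hterm1 : ∀ m : ℕ,
        y ^ (m+1) * Q ^ T (m+1) / qPoch Q Q (m+1) - (Q*y) ^ (m+1) * Q ^ T (m+1) / qPoch Q Q (m+1)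
        = y * ((Q*y) ^ m * Q ^ T m / qPoch Q Q m) := by
      intro m
      have hTm : T (m+1) = T m + m := Finset.sum_range_succ _ _
      have hps : qPoch Q Q (m+1) = qPoch Q Q m * (1 - Q * Q ^ m) := qPoch_succ _ _ _
      have hne : (1:ℂ) - Q * Q ^ m ≠ 0 := factor_ne hQ hQ m
      have hpm : qPoch Q Q m ≠ 0 := qPoch_ne_zero hQ hQ m
      rw [hTm, hps, pow_add]
      field_simp
      ring
    rw [tsum_congr hterm1, tsum_mul_left] at hdiff
    have : E y - E (Q * y) = y * E (Q * y) := hdiff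
    linear_combination this
  have hiter : ∀ N, E x = qPoch (-x) Q N * E (Q ^ N * x) := by
    intro N
    induction N with
    | zero => simp [qPoch_zero]
    | succ N ih =>
      have hyn : ‖Q ^ N * x‖ < 1 := by
        rw [norm_mul, norm_pow]
        have h1 : ‖Q‖ ^ N ≤ 1 := pow_le_one₀ (norm_nonneg Q) hQ.le
        nlinarith [norm_nonneg x, pow_nonneg (norm_nonneg Q) N]
      rw [ih, hfe (Q ^ N * x) hyn, qPoch_succ]
      have hq1 : Q * (Q ^ N * x) = Q ^ (N+1) * x := by ring
      rw [hq1]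
      ring
  have hlim1 : Tendsto (fun N => qPoch (-x) Q N) atTop (𝓝 (qPochInf (-x) Q)) :=
    tendsto_qPoch (by rwa [norm_neg]) hQ
  have hEbnd : ∀ y : ℂ, ‖y‖ ≤ ‖x‖ → ‖E y - 1‖ ≤ ‖y‖ * (c⁻¹ * (1 - ‖x‖)⁻¹) := by
    intro y hy
    have hy1 : ‖y‖ < 1 := lt_of_le_of_lt hy hx
    have hs1 := hsum y hy1
    have h1 : E y = (y ^ 0 * Q ^ T 0 / qPoch Q Q 0)
        + ∑' m : ℕ, y ^ (m+1) * Q ^ T (m+1) / qPoch Q Q (m+1) := Summable.tsum_eq_zero_add hs1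
    have h2 : y ^ 0 * Q ^ T 0 / qPoch Q Q 0 = 1 := by simp [qPoch_zero, hT]
    rw [h2] at h1
    have h3 : E y - 1 = ∑' m : ℕ, y ^ (m+1) * Q ^ T (m+1) / qPoch Q Q (m+1) := by
      rw [h1]; ring
    rw [h3]
    have hgs : Summable (fun m : ℕ => ‖y‖ ^ (m+1) * c⁻¹) := by
      have := ((summable_geometric_of_lt_one (norm_nonneg y) hy1).mul_right (‖y‖ * c⁻¹))
      apply this.congr
      intro m
      ring
    have hns : Summable (fun m : ℕ => ‖y ^ (m+1) * Q ^ T (m+1) / qPoch Q Q (m+1)‖) :=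
      Summable.of_nonneg_of_le (fun m => norm_nonneg _) (fun m => hterm y (m+1)) hgs
    calc ‖∑' m : ℕ, y ^ (m+1) * Q ^ T (m+1) / qPoch Q Q (m+1)‖
        ≤ ∑' m : ℕ, ‖y ^ (m+1) * Q ^ T (m+1) / qPoch Q Q (m+1)‖ := norm_tsum_le_tsum_norm hns
      _ ≤ ∑' m : ℕ, ‖y‖ ^ (m+1) * c⁻¹ := Summable.tsum_le_tsum (fun m => hterm y (m+1)) hns hgs
      _ = (‖y‖ * c⁻¹) * ∑' m : ℕ, ‖y‖ ^ m := by
          rw [← tsum_mul_left]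
          apply tsum_congr
          intro m
          ring
      _ = (‖y‖ * c⁻¹) * (1 - ‖y‖)⁻¹ := by rw [tsum_geometric_of_lt_one (norm_nonneg y) hy1]
      _ ≤ ‖y‖ * (c⁻¹ * (1 - ‖x‖)⁻¹) := by
          have hxx : (0:ℝ) < 1 - ‖x‖ := by linarith
          have hyy : (1 - ‖y‖)⁻¹ ≤ (1 - ‖x‖)⁻¹ := by
            apply inv_anti₀ hxx
            linarith
          have : (0:ℝ) ≤ ‖y‖ * c⁻¹ := mul_nonneg (norm_nonneg y) (inv_nonneg.2 hc.le)
          nlinarith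
  have hlim2 : Tendsto (fun N => E (Q ^ N * x)) atTop (𝓝 1) := by
    have h0 : Tendsto (fun N : ℕ => Q ^ N * x) atTop (𝓝 0) := by
      simpa using (tendsto_pow_atTop_nhds_zero_of_norm_lt_one hQ).mul_const x
    have hb : ∀ N : ℕ, ‖Q ^ N * x‖ ≤ ‖x‖ := by
      intro N
      rw [norm_mul, norm_pow]
      have h1 : ‖Q‖ ^ N ≤ 1 := pow_le_one₀ (norm_nonneg Q) hQ.le
      nlinarith [norm_nonneg x, pow_nonneg (norm_nonneg Q) N]
    have hsq : Tendsto (fun N => E (Q ^ N * x) - 1) atTop (𝓝 0) := by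
      apply squeeze_zero_norm (fun N => hEbnd (Q ^ N * x) (hb N))
      have h2 : Tendsto (fun N : ℕ => ‖Q ^ N * x‖) atTop (𝓝 0) := by
        simpa using h0.norm
      simpa using h2.mul_const (c⁻¹ * (1 - ‖x‖)⁻¹)
    have := tendsto_sub_nhds_zero_iff.mp hsq
    exact this
  have hfinal : Tendsto (fun N => qPoch (-x) Q N * E (Q ^ N * x)) atTop
      (𝓝 (qPochInf (-x) Q * 1)) := hlim1.mul hlim2
  rw [mul_one] at hfinal
  have hconst : Tendsto (fun _ : ℕ => E x) atTop (𝓝 (E x)) := tendsto_const_nhds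
  have := tendsto_nhds_unique (hconst.congr fun N => hiter N) hfinal
  exact this

lemma qbinom {Q : ℂ} (hQ : ‖Q‖ < 1) (x : ℂ) (n : ℕ) :
    qPoch (-x) Q n = ∑ k ∈ range (n + 1),
      Q ^ (∑ i ∈ range k, i) * x ^ k * (qPoch Q Q n / (qPoch Q Q k * qPoch Q Q (n - k))) := by
  have hP : ∀ j, qPoch Q Q j ≠ 0 := qPoch_ne_zero hQ hQ
  induction n with
  | zero => simp [qPoch_zero]
  | succ n ih =>
    have hsplit : ∀ k ∈ range (n + 1 + 1),
        Q ^ (∑ i ∈ range k, i) * x ^ k * (qPoch Q Q (n+1) / (qPoch Q Q k * qPoch Q Q (n + 1 - k)))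
        = (if k ≤ n then Q ^ (∑ i ∈ range k, i) * x ^ k *
              (qPoch Q Q n / (qPoch Q Q k * qPoch Q Q (n - k))) else 0)
          + x * Q ^ n * (if k = 0 then 0 else Q ^ (∑ i ∈ range (k-1), i) * x ^ (k-1) *
              (qPoch Q Q n / (qPoch Q Q (k-1) * qPoch Q Q (n - (k-1))))) := by
      intro k hk
      rw [Finset.mem_range] at hk
      rcases Nat.eq_zero_or_pos k with hk0 | hk1
      · subst hk0
        rw [if_pos (Nat.zero_le n), if_pos rfl]
        simp [qPoch_zero, div_self (hP (n+1)), div_self (hP n)]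
      · obtain ⟨j, rfl⟩ : ∃ j, k = j + 1 := ⟨k - 1, by omega⟩
        rw [if_neg (Nat.succ_ne_zero j)]
        simp only [Nat.add_sub_cancel]
        have hTk : (∑ i ∈ range (j+1), i) = (∑ i ∈ range j, i) + j := Finset.sum_range_succ _ _
        rcases Nat.lt_or_ge (j+1) (n+1) with hjlt | hge
        · -- 1 ≤ k ≤ n
          have hjn2 : j + 1 ≤ n := by omega
          rw [if_pos hjn2]
          have h1 : n + 1 - (j+1) = n - j := by omega
          have h2 : n - (j+1) = n - j - 1 := by omega
          rw [h1, h2, hTk]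
          set m := n - j - 1 with hm
          rw [show n - j = m + 1 by omega]
          have e1 : qPoch Q Q (n+1) = qPoch Q Q n * (1 - (Q * Q ^ j) * (Q * Q ^ m)) := by
            rw [qPoch_succ]
            congr 2
            rw [show Q * Q ^ j * (Q * Q ^ m) = Q * (Q ^ j * Q ^ m * Q) by ring,
              ← pow_add, ← pow_succ]
            congr 2
            omega
          have e2 : qPoch Q Q (m+1) = qPoch Q Q m * (1 - Q * Q ^ m) := qPoch_succ _ _ _
          have e3 : qPoch Q Q (j+1) = qPoch Q Q j * (1 - Q * Q ^ j) := qPoch_succ _ _ _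
          have hqn : (Q:ℂ) ^ n = Q ^ j * Q ^ m * Q := by
            rw [← pow_add, ← pow_succ]
            congr 1
            omega
          rw [e1, e2, e3, hqn]
          have hne1 : (1:ℂ) - Q * Q ^ j ≠ 0 := factor_ne hQ hQ j
          have hne2 : (1:ℂ) - Q * Q ^ m ≠ 0 := factor_ne hQ hQ m
          have hp1 := hP j
          have hp2 := hP m
          have hp3 := hP n
          rw [pow_add]
          field_simp
          linear_combination (Q * Q ^ (∑ i ∈ range j, i) * Q ^ j * Q ^ m * x * x ^ j) * (mul_inv_cancel₀ hne1)
        · -- k = n + 1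
          have hjn' : j = n := by omega
          subst hjn'
          rw [if_neg (by omega)]
          rw [hTk]
          simp only [Nat.add_sub_cancel_left, Nat.sub_self, qPoch_zero, mul_one]
          rw [div_self (hP (j+1)), div_self (hP j)]
          rw [pow_add]
          ring
    rw [Finset.sum_congr rfl hsplit, Finset.sum_add_distrib]
    have hA : ∑ k ∈ range (n+1+1), (if k ≤ n then Q ^ (∑ i ∈ range k, i) * x ^ k *
        (qPoch Q Q n / (qPoch Q Q k * qPoch Q Q (n - k))) else 0)
        = ∑ k ∈ range (n+1), Q ^ (∑ i ∈ range k, i) * x ^ k *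
            (qPoch Q Q n / (qPoch Q Q k * qPoch Q Q (n - k))) := by
      rw [Finset.sum_range_succ, if_neg (by omega), add_zero]
      apply Finset.sum_congr rfl
      intro k hk
      rw [Finset.mem_range] at hk
      rw [if_pos (by omega)]
    have hB : ∑ k ∈ range (n+1+1), (x * Q ^ n * (if k = 0 then 0 else
        Q ^ (∑ i ∈ range (k-1), i) * x ^ (k-1) *
        (qPoch Q Q n / (qPoch Q Q (k-1) * qPoch Q Q (n - (k-1))))))
        = x * Q ^ n * ∑ k ∈ range (n+1), Q ^ (∑ i ∈ range k, i) * x ^ k *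
            (qPoch Q Q n / (qPoch Q Q k * qPoch Q Q (n - k))) := by
      rw [← Finset.mul_sum]
      congr 1
      rw [Finset.sum_range_succ']
      simp [Nat.add_sub_cancel]
    rw [hA, hB, qPoch_succ, ← ih]
    ring

lemma qPochInf_mul_neg {a Q : ℂ} (ha : ‖a‖ < 1) (hQ : ‖Q‖ < 1) :
    qPochInf a Q * qPochInf (-a) Q = qPochInf (a ^ 2) (Q ^ 2) := by
  have hna : ‖-a‖ < 1 := by rwa [norm_neg]
  rw [qPochInf, qPochInf, qPochInf,
    ← Multipliable.tprod_mul (multipliable_qPoch ha hQ) (multipliable_qPoch hna hQ)]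
  refine tprod_congr fun k => ?_
  have hqq : ((Q:ℂ) ^ 2) ^ k = Q ^ k * Q ^ k := by
    rw [← pow_mul, two_mul, pow_add]
  rw [hqq]
  ring

lemma qPochInf_split {a Q : ℂ} (ha : ‖a‖ < 1) (hQ : ‖Q‖ < 1) :
    qPochInf a Q = qPochInf a (Q ^ 2) * qPochInf (a * Q) (Q ^ 2) := by
  have hQ2 : ‖Q ^ 2‖ < 1 := by
    rw [norm_pow]
    nlinarith [norm_nonneg Q]
  have haQ : ‖a * Q‖ < 1 := by
    rw [norm_mul]
    nlinarith [norm_nonneg a, norm_nonneg Q]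
  have he : Multipliable (fun k : ℕ => 1 - a * Q ^ (2 * k)) := by
    apply (multipliable_qPoch ha hQ2).congr
    intro k
    rw [← pow_mul]
  have ho : Multipliable (fun k : ℕ => 1 - a * Q ^ (2 * k + 1)) := by
    apply (multipliable_qPoch haQ hQ2).congr
    intro k
    rw [← pow_mul, pow_succ]
    ring
  rw [qPochInf, ← tprod_even_mul_odd (f := fun k : ℕ => 1 - a * Q ^ k) he ho]
  congr 1
  · exact tprod_congr fun k => by rw [← pow_mul]
  · exact tprod_congr fun k => by rw [← pow_mul, pow_succ]; ring

lemma qPochInf_tail {a Q : ℂ} (ha : ‖a‖ < 1) (hQ : ‖Q‖ < 1) (k : ℕ) :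
    qPochInf (a * Q ^ k) Q = qPochInf a Q / qPoch a Q k := by
  have hm : Multipliable (fun n : ℕ => 1 - a * Q ^ (n + k)) := by
    apply (multipliable_qPoch (factor_norm_lt ha hQ k) hQ).congr
    intro n
    rw [pow_add]
    ring
  have h := Multipliable.prod_mul_tprod_nat_mul' (f := fun j : ℕ => 1 - a * Q ^ j) (k := k) hm
  have h2 : qPochInf (a * Q ^ k) Q = ∏' i : ℕ, (1 - a * Q ^ (i + k)) := by
    apply tprod_congr
    intro i
    rw [pow_add]
    ring
  rw [h2, eq_div_iff (qPoch_ne_zero ha hQ k),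
    mul_comm (∏' i : ℕ, (1 - a * Q ^ (i + k))) (qPoch a Q k)]
  exact h

end QG

noncomputable def Gd (q : ℂ) (p : ℕ × ℕ) : ℂ :=
  q ^ ((p.1 + p.2) ^ 2 + (p.1 + p.2) + p.1 ^ 2) /
    (qPoch (q ^ 2) (q ^ 2) p.1 * qPoch (q ^ 2) (q ^ 2) p.2)

lemma Gd_def (q : ℂ) (k m : ℕ) : Gd q (k, m)
    = q ^ ((k + m) ^ 2 + (k + m) + k ^ 2) / (qPoch (q ^ 2) (q ^ 2) k * qPoch (q ^ 2) (q ^ 2) m) :=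
  rfl

open QG in
theorem stmt7 (q : ℂ) (hq : ‖q‖ < 1) :
    ∑' n : ℕ, (q ^ (n ^ 2 + n) * qPoch (-q) (q ^ 2) n / qPoch (q ^ 2) (q ^ 2) n)
    = 1 / (qPochInf (q ^ 2) (q ^ 8) * qPochInf (q ^ 3) (q ^ 8) * qPochInf (q ^ 7) (q ^ 8)) := by
  have hq1 : ‖q‖ < 1 := by exact hq
  have hpow : ∀ r : ℕ, 1 ≤ r → ‖q ^ r‖ < 1 := fun r hr => by
    rw [norm_pow]
    exact pow_lt_one₀ (norm_nonneg q) hq1 (by omega)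
  have h2 : ‖(q:ℂ) ^ 2‖ < 1 := hpow 2 (by norm_num)
  have h3 : ‖(q:ℂ) ^ 3‖ < 1 := hpow 3 (by norm_num)
  have h4 : ‖(q:ℂ) ^ 4‖ < 1 := hpow 4 (by norm_num)
  have h6 : ‖(q:ℂ) ^ 6‖ < 1 := hpow 6 (by norm_num)
  have h7 : ‖(q:ℂ) ^ 7‖ < 1 := hpow 7 (by norm_num)
  have h8 : ‖(q:ℂ) ^ 8‖ < 1 := hpow 8 (by norm_num)
  have hn2 : ‖-((q:ℂ) ^ 2)‖ < 1 := by rwa [norm_neg]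
  have hn3 : ‖-((q:ℂ) ^ 3)‖ < 1 := by rwa [norm_neg]
  have hP2 : ∀ n, qPoch (q ^ 2) (q ^ 2) n ≠ 0 := qPoch_ne_zero h2 h2
  obtain ⟨C, hC, _, hCn⟩ := qPochInf_norm_lb h2 h2
  -- Summability of Gd q
  have hGb : ∀ p : ℕ × ℕ, ‖Gd q p‖ ≤ ‖q‖ ^ p.1 * ‖q‖ ^ p.2 * (C⁻¹ * C⁻¹) := by
    rintro ⟨k, m⟩
    rw [Gd_def, norm_div, norm_mul, norm_pow]
    have hck : 0 < ‖qPoch (q^2) (q^2) k‖ := lt_of_lt_of_le hC (hCn k)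
    have hcm : 0 < ‖qPoch (q^2) (q^2) m‖ := lt_of_lt_of_le hC (hCn m)
    have hEe : k + m ≤ (k + m) ^ 2 + (k + m) + k ^ 2 :=
      (Nat.le_add_left (k + m) ((k + m) ^ 2)).trans (Nat.le_add_right _ _)
    calc ‖q‖ ^ ((k + m) ^ 2 + (k + m) + k ^ 2) / (‖qPoch (q^2) (q^2) k‖ * ‖qPoch (q^2) (q^2) m‖)
        ≤ ‖q‖ ^ (k + m) / (C * C) := by
          apply div_le_div₀ (pow_nonneg (norm_nonneg q) _)
            (pow_le_pow_of_le_one (norm_nonneg q) hq1.le hEe) (mul_pos hC hC)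
            (mul_le_mul (hCn k) (hCn m) hC.le (le_trans hC.le (hCn k)))
      _ = ‖q‖ ^ k * ‖q‖ ^ m * (C⁻¹ * C⁻¹) := by
          rw [pow_add]
          field_simp
  have hgs : Summable (fun p : ℕ × ℕ => ‖q‖ ^ p.1 * ‖q‖ ^ p.2 * (C⁻¹ * C⁻¹)) := by
    apply Summable.mul_right
    exact Summable.mul_of_nonneg (summable_geometric_of_lt_one (norm_nonneg q) hq1)
      (summable_geometric_of_lt_one (norm_nonneg q) hq1)
      (fun k => pow_nonneg (norm_nonneg q) k) (fun m => pow_nonneg (norm_nonneg q) m)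
  have hG : Summable (Gd q) := Summable.of_norm_bounded hgs hGb
  -- Step 1: diagonal resummation
  have hterm : ∀ n : ℕ, q ^ (n ^ 2 + n) * qPoch (-q) (q ^ 2) n / qPoch (q ^ 2) (q ^ 2) n
      = ∑ p ∈ Finset.HasAntidiagonal.antidiagonal n, Gd q p := by
    intro n
    rw [Finset.Nat.sum_antidiagonal_eq_sum_range_succ_mk, qbinom h2 q n, Finset.mul_sum,
      Finset.sum_div]
    apply Finset.sum_congr rfl
    intro k hk
    rw [Finset.mem_range] at hk
    have hkn : k + (n - k) = n := by omega
    have hqB : q ^ (n ^ 2 + n) * ((q ^ 2) ^ (∑ i ∈ range k, i) * q ^ k)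
        = q ^ ((k + (n - k)) ^ 2 + (k + (n - k)) + k ^ 2) := by
      rw [← pow_mul, ← pow_add, ← pow_add, hkn]
      congr 1
      have hT := Tlem k
      simp only [pow_two]
      linarith
    rw [Gd_def, ← hqB]
    have hcn := hP2 n
    calc q ^ (n ^ 2 + n) * ((q ^ 2) ^ (∑ i ∈ range k, i) * q ^ k *
            (qPoch (q^2) (q^2) n / (qPoch (q^2) (q^2) k * qPoch (q^2) (q^2) (n - k)))) /
          qPoch (q^2) (q^2) n
        = q ^ (n ^ 2 + n) * ((q ^ 2) ^ (∑ i ∈ range k, i) * q ^ k) *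
            (qPoch (q^2) (q^2) n / qPoch (q^2) (q^2) n) *
            (1 / (qPoch (q^2) (q^2) k * qPoch (q^2) (q^2) (n - k))) := by ring
      _ = q ^ (n ^ 2 + n) * ((q ^ 2) ^ (∑ i ∈ range k, i) * q ^ k) /
            (qPoch (q^2) (q^2) k * qPoch (q^2) (q^2) (n - k)) := by
          rw [div_self hcn]
          ring
  have hdiag : (∑' n : ℕ, (q ^ (n ^ 2 + n) * qPoch (-q) (q ^ 2) n / qPoch (q ^ 2) (q ^ 2) n))
      = ∑' p : ℕ × ℕ, Gd q p := by
    rw [tsum_congr hterm]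
    have hsig : Summable (fun x : (Σ n : ℕ, ↥(Finset.HasAntidiagonal.antidiagonal n)) =>
        Gd q (Finset.HasAntidiagonal.sigmaAntidiagonalEquivProd x)) :=
      (Equiv.summable_iff _).mpr hG
    rw [← Finset.HasAntidiagonal.sigmaAntidiagonalEquivProd.tsum_eq (Gd q), Summable.tsum_sigma hsig]
    apply tsum_congr
    intro n
    exact (Finset.tsum_subtype (Finset.HasAntidiagonal.antidiagonal n) (Gd q)).symm
  -- Step 2: iterated sum and inner Euler
  have hprod : (∑' p : ℕ × ℕ, Gd q p) = ∑' k : ℕ, ∑' m : ℕ, Gd q (k, m) := Summable.tsum_prod hG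
  have hinner : ∀ k : ℕ, (∑' m : ℕ, Gd q (k, m))
      = q ^ (2 * k ^ 2 + k) / qPoch (q ^ 2) (q ^ 2) k *
        (qPochInf (-(q ^ 2)) (q ^ 2) / qPoch (-(q ^ 2)) (q ^ 2) k) := by
    intro k
    have hx : ‖(q:ℂ) ^ (2 * k + 2)‖ < 1 := hpow (2 * k + 2) (by omega)
    have hstep : ∀ m : ℕ, Gd q (k, m) = (q ^ (2 * k ^ 2 + k) / qPoch (q ^ 2) (q ^ 2) k) *
        ((q ^ (2 * k + 2)) ^ m * (q ^ 2) ^ (∑ i ∈ range m, i) / qPoch (q ^ 2) (q ^ 2) m) := by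
      intro m
      have hex : (k + m) ^ 2 + (k + m) + k ^ 2
          = (2 * k ^ 2 + k) + ((2 * k + 2) * m + 2 * (∑ i ∈ range m, i)) := by
        have hT := Tlem m
        simp only [pow_two]
        ring_nf
        ring_nf at hT
        linarith
      rw [Gd_def, hex, pow_add q (2 * k ^ 2 + k), pow_add q ((2 * k + 2) * m),
        pow_mul q (2 * k + 2) m, pow_mul q 2]
      ring
    rw [tsum_congr hstep, tsum_mul_left, euler h2 hx]
    have hco : -((q:ℂ) ^ (2 * k + 2)) = -(q ^ 2) * (q ^ 2) ^ k := by
      rw [← pow_mul, neg_mul, ← pow_add]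
      congr 2
      omega
    rw [hco, qPochInf_tail hn2 h2 k]
  -- Step 3: outer Euler
  have hcd : ∀ k : ℕ, qPoch (q ^ 2) (q ^ 2) k * qPoch (-(q ^ 2)) (q ^ 2) k
      = qPoch (q ^ 4) (q ^ 4) k := by
    intro k
    rw [qPoch, qPoch, qPoch, ← Finset.prod_mul_distrib]
    apply Finset.prod_congr rfl
    intro j _
    have ha2 : ((q:ℂ) ^ 2) ^ j = q ^ (2 * j) := by rw [← pow_mul]
    have ha4 : ((q:ℂ) ^ 4) ^ j = q ^ (4 * j) := by rw [← pow_mul]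
    rw [ha2, ha4]
    have hb2 : (q:ℂ) ^ 2 * q ^ (2 * j) = q ^ (2 + 2 * j) := by rw [pow_add]
    have hb4 : (q:ℂ) ^ 4 * q ^ (4 * j) = q ^ (4 + 4 * j) := by rw [pow_add]
    have hsq : (q:ℂ) ^ (4 + 4 * j) = q ^ (2 + 2 * j) * q ^ (2 + 2 * j) := by
      rw [← pow_add]
      congr 1
      omega
    calc (1 - q ^ 2 * q ^ (2 * j)) * (1 - -(q ^ 2) * q ^ (2 * j))
        = 1 - (q ^ 2 * q ^ (2 * j)) * (q ^ 2 * q ^ (2 * j)) := by ring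
      _ = 1 - q ^ 4 * q ^ (4 * j) := by rw [hb2, hb4, hsq]
  have houter : (∑' k : ℕ, ∑' m : ℕ, Gd q (k, m))
      = qPochInf (-(q ^ 2)) (q ^ 2) * qPochInf (-(q ^ 3)) (q ^ 4) := by
    rw [tsum_congr hinner]
    have hre : ∀ k : ℕ, q ^ (2 * k ^ 2 + k) / qPoch (q ^ 2) (q ^ 2) k *
        (qPochInf (-(q ^ 2)) (q ^ 2) / qPoch (-(q ^ 2)) (q ^ 2) k)
        = qPochInf (-(q ^ 2)) (q ^ 2) *
          ((q ^ 3) ^ k * (q ^ 4) ^ (∑ i ∈ range k, i) / qPoch (q ^ 4) (q ^ 4) k) := by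
      intro k
      have hexp : (q:ℂ) ^ (2 * k ^ 2 + k) = (q ^ 3) ^ k * (q ^ 4) ^ (∑ i ∈ range k, i) := by
        rw [← pow_mul, ← pow_mul, ← pow_add]
        congr 1
        have hT := Tlem k
        simp only [pow_two]
        linarith
      rw [← hcd k, hexp]
      ring
    rw [tsum_congr hre, tsum_mul_left, euler h4 h3]
  -- Combine: the sum equals the two infinite products
  have hS : (∑' n : ℕ, (q ^ (n ^ 2 + n) * qPoch (-q) (q ^ 2) n / qPoch (q ^ 2) (q ^ 2) n))
      = qPochInf (-(q ^ 2)) (q ^ 2) * qPochInf (-(q ^ 3)) (q ^ 4) := by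
    rw [hdiag, hprod, houter]
  -- Product identities
  have e84 : ((q:ℂ) ^ 4) ^ 2 = q ^ 8 := by ring
  have e48 : ((q:ℂ) ^ 2) ^ 2 = q ^ 4 := by ring
  have e816 : ((q:ℂ) ^ 8) ^ 2 = q ^ 16 := by ring
  have hB : qPochInf (-(q ^ 3)) (q ^ 4)
      = qPochInf (-(q ^ 3)) (q ^ 8) * qPochInf (-(q ^ 7)) (q ^ 8) := by
    have := qPochInf_split hn3 h4
    rw [e84, show (-((q:ℂ) ^ 3)) * q ^ 4 = -(q ^ 7) by ring] at this
    exact this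
  have h36 : qPochInf (q ^ 3) (q ^ 8) * qPochInf (-(q ^ 3)) (q ^ 8)
      = qPochInf (q ^ 6) (q ^ 16) := by
    have := qPochInf_mul_neg h3 h8
    rw [e816, show ((q:ℂ) ^ 3) ^ 2 = q ^ 6 by ring] at this
    exact this
  have h714 : qPochInf (q ^ 7) (q ^ 8) * qPochInf (-(q ^ 7)) (q ^ 8)
      = qPochInf (q ^ 14) (q ^ 16) := by
    have := qPochInf_mul_neg h7 h8
    rw [e816, show ((q:ℂ) ^ 7) ^ 2 = q ^ 14 by ring] at this
    exact this
  have h616 : qPochInf (q ^ 6) (q ^ 8) = qPochInf (q ^ 6) (q ^ 16) * qPochInf (q ^ 14) (q ^ 16) := by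
    have := qPochInf_split h6 h8
    rw [e816, show ((q:ℂ) ^ 6) * q ^ 8 = q ^ 14 by ring] at this
    exact this
  have h24 : qPochInf (q ^ 2) (q ^ 4) = qPochInf (q ^ 2) (q ^ 8) * qPochInf (q ^ 6) (q ^ 8) := by
    have := qPochInf_split h2 h4
    rw [e84, show ((q:ℂ) ^ 2) * q ^ 4 = q ^ 6 by ring] at this
    exact this
  have h44 : qPochInf (q ^ 2) (q ^ 2) * qPochInf (-(q ^ 2)) (q ^ 2)
      = qPochInf (q ^ 4) (q ^ 4) := by
    have := qPochInf_mul_neg h2 h2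
    rw [e48] at this
    exact this
  have h22 : qPochInf (q ^ 2) (q ^ 2) = qPochInf (q ^ 2) (q ^ 4) * qPochInf (q ^ 4) (q ^ 4) := by
    have := qPochInf_split h2 h2
    rw [e48, show ((q:ℂ) ^ 2) * q ^ 2 = q ^ 4 by ring] at this
    exact this
  have hA1 : qPochInf (-(q ^ 2)) (q ^ 2) * qPochInf (q ^ 2) (q ^ 4) = 1 := by
    have hne : qPochInf (q ^ 4) (q ^ 4) ≠ 0 := qPochInf_ne_zero h4 h4
    apply mul_right_cancel₀ hne
    calc qPochInf (-(q ^ 2)) (q ^ 2) * qPochInf (q ^ 2) (q ^ 4) * qPochInf (q ^ 4) (q ^ 4)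
        = qPochInf (q ^ 2) (q ^ 2) * qPochInf (-(q ^ 2)) (q ^ 2) := by rw [h22]; ring
      _ = qPochInf (q ^ 4) (q ^ 4) := h44
      _ = 1 * qPochInf (q ^ 4) (q ^ 4) := (one_mul _).symm
  -- final assembly
  have hDne : qPochInf (q ^ 2) (q ^ 8) * qPochInf (q ^ 3) (q ^ 8) * qPochInf (q ^ 7) (q ^ 8) ≠ 0 :=
    mul_ne_zero (mul_ne_zero (qPochInf_ne_zero h2 h8) (qPochInf_ne_zero h3 h8))
      (qPochInf_ne_zero h7 h8)
  rw [hS, eq_div_iff hDne]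
  calc qPochInf (-(q ^ 2)) (q ^ 2) * qPochInf (-(q ^ 3)) (q ^ 4) *
        (qPochInf (q ^ 2) (q ^ 8) * qPochInf (q ^ 3) (q ^ 8) * qPochInf (q ^ 7) (q ^ 8))
      = (qPochInf (q ^ 3) (q ^ 8) * qPochInf (-(q ^ 3)) (q ^ 8)) *
          ((qPochInf (q ^ 7) (q ^ 8) * qPochInf (-(q ^ 7)) (q ^ 8)) *
            (qPochInf (-(q ^ 2)) (q ^ 2) * qPochInf (q ^ 2) (q ^ 8))) := by
        rw [hB]; ring
    _ = qPochInf (q ^ 6) (q ^ 16) * (qPochInf (q ^ 14) (q ^ 16) *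
          (qPochInf (-(q ^ 2)) (q ^ 2) * qPochInf (q ^ 2) (q ^ 8))) := by rw [h36, h714]
    _ = (qPochInf (q ^ 6) (q ^ 16) * qPochInf (q ^ 14) (q ^ 16)) *
          (qPochInf (-(q ^ 2)) (q ^ 2) * qPochInf (q ^ 2) (q ^ 8)) := by ring
    _ = qPochInf (q ^ 6) (q ^ 8) * (qPochInf (-(q ^ 2)) (q ^ 2) * qPochInf (q ^ 2) (q ^ 8)) := by
        rw [← h616]
    _ = qPochInf (-(q ^ 2)) (q ^ 2) * (qPochInf (q ^ 2) (q ^ 8) * qPochInf (q ^ 6) (q ^ 8)) := by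
        ring
    _ = qPochInf (-(q ^ 2)) (q ^ 2) * qPochInf (q ^ 2) (q ^ 4) := by rw [← h24]
    _ = 1 := hA1
end

section
/- For |q| < 1, one has ∑_{n≥0} q^{3·binom(n,2)+n} (q^2;q^6)_n / (q;q)_{3n} = 1 / ((q;q^3)_∞ (q^5;q^6)_∞). -/
open Finset

namespace RRaux

lemma factor_norm_lt {a r : ℂ} (ha : ‖a‖ < 1) (hr : ‖r‖ ≤ 1) (k : ℕ) :
    ‖a * r ^ k‖ < 1 := by
  rw [norm_mul, norm_pow]
  calc ‖a‖ * ‖r‖ ^ k ≤ ‖a‖ * 1 := by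
        gcongr
        exact pow_le_one₀ (norm_nonneg r) hr
    _ < 1 := by simpa using ha

lemma factor_ne_zero {a r : ℂ} (ha : ‖a‖ < 1) (hr : ‖r‖ ≤ 1) (k : ℕ) :
    1 - a * r ^ k ≠ 0 := by
  intro h
  have h2 : a * r ^ k = 1 := by linear_combination -h
  have := factor_norm_lt ha hr k
  rw [h2, norm_one] at this
  exact lt_irrefl _ this

lemma qPoch_ne_zero {a r : ℂ} (ha : ‖a‖ < 1) (hr : ‖r‖ ≤ 1) (n : ℕ) :
    qPoch a r n ≠ 0 :=
  Finset.prod_ne_zero_iff.2 fun k _ => factor_ne_zero ha hr k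

lemma geom_partial_le {t : ℝ} (h0 : 0 ≤ t) (h1 : t < 1) (n : ℕ) :
    ∑ k ∈ range n, t ^ k ≤ (1 - t)⁻¹ := by
  have hs := summable_geometric_of_lt_one h0 h1
  have := Summable.sum_le_tsum (range n) (fun k _ => pow_nonneg h0 k) hs
  rwa [tsum_geometric_of_lt_one h0 h1] at this

lemma qPoch_norm_le {a r : ℂ} (hr : ‖r‖ < 1) (n : ℕ) :
    ‖qPoch a r n‖ ≤ Real.exp (‖a‖ * (1 - ‖r‖)⁻¹) := by
  have h1 : ‖qPoch a r n‖ ≤ ∏ k ∈ range n, (1 + ‖a‖ * ‖r‖ ^ k) := by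
    rw [qPoch]
    refine (Finset.norm_prod_le _ _).trans ?_
    refine Finset.prod_le_prod (fun k _ => norm_nonneg _) (fun k _ => ?_)
    calc ‖1 - a * r ^ k‖ ≤ ‖(1:ℂ)‖ + ‖a * r ^ k‖ := norm_sub_le _ _
      _ = 1 + ‖a‖ * ‖r‖ ^ k := by rw [norm_one, norm_mul, norm_pow]
  refine h1.trans ?_
  have h2 : ∏ k ∈ range n, (1 + ‖a‖ * ‖r‖ ^ k)
      ≤ ∏ k ∈ range n, Real.exp (‖a‖ * ‖r‖ ^ k) := by
    refine Finset.prod_le_prod (fun k _ => ?_) (fun k _ => ?_)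
    · positivity
    · have := Real.add_one_le_exp (‖a‖ * ‖r‖ ^ k)
      linarith
  refine h2.trans ?_
  rw [← Real.exp_sum]
  apply Real.exp_le_exp.2
  rw [← Finset.mul_sum]
  gcongr
  exact geom_partial_le (norm_nonneg r) hr n

lemma exp_le_one_sub {t t₀ : ℝ} (h0 : 0 ≤ t) (h1 : t ≤ t₀) (h2 : t₀ < 1) :
    Real.exp (-(t * (1 - t₀)⁻¹)) ≤ 1 - t := by
  have ht : t < 1 := lt_of_le_of_lt h1 h2
  have hpos : (0:ℝ) < 1 - t := by linarith
  have hlog : Real.log (1 - t)⁻¹ ≤ (1 - t)⁻¹ - 1 :=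
    Real.log_le_sub_one_of_pos (by positivity)
  rw [Real.log_inv] at hlog
  have h3 : -(t * (1 - t)⁻¹) ≤ Real.log (1 - t) := by
    have he : (1 - t)⁻¹ - 1 = t * (1 - t)⁻¹ := by field_simp; ring
    nlinarith [hlog, he]
  have h4 : t * (1 - t)⁻¹ ≤ t * (1 - t₀)⁻¹ := by
    gcongr <;> linarith
  have := Real.exp_log hpos
  calc Real.exp (-(t * (1 - t₀)⁻¹)) ≤ Real.exp (Real.log (1 - t)) :=
        Real.exp_le_exp.2 (by linarith)
    _ = 1 - t := Real.exp_log hpos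

lemma qPoch_norm_ge {a r : ℂ} (ha : ‖a‖ < 1) (hr : ‖r‖ < 1) (n : ℕ) :
    Real.exp (-(‖a‖ * (1 - ‖a‖)⁻¹ * (1 - ‖r‖)⁻¹)) ≤ ‖qPoch a r n‖ := by
  have h1 : ∏ k ∈ range n, (1 - ‖a‖ * ‖r‖ ^ k) ≤ ‖qPoch a r n‖ := by
    rw [qPoch, norm_prod]
    refine Finset.prod_le_prod (fun k _ => ?_) (fun k _ => ?_)
    · have hk : ‖a‖ * ‖r‖ ^ k ≤ ‖a‖ := by
        calc ‖a‖ * ‖r‖ ^ k ≤ ‖a‖ * 1 := by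
              gcongr; exact pow_le_one₀ (norm_nonneg r) hr.le
          _ = ‖a‖ := mul_one _
      have : Real.exp (-(‖a‖ * ‖r‖ ^ k * (1 - ‖a‖)⁻¹)) ≤ 1 - ‖a‖ * ‖r‖ ^ k :=
        exp_le_one_sub (by positivity) hk ha
      linarith [Real.exp_pos (-(‖a‖ * ‖r‖ ^ k * (1 - ‖a‖)⁻¹))]
    · calc (1:ℝ) - ‖a‖ * ‖r‖ ^ k ≤ ‖(1:ℂ)‖ - ‖a * r ^ k‖ := by
            rw [norm_one, norm_mul, norm_pow]
        _ ≤ ‖1 - a * r ^ k‖ := norm_sub_norm_le _ _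
  refine le_trans ?_ h1
  have h2 : ∏ k ∈ range n, Real.exp (-(‖a‖ * ‖r‖ ^ k * (1 - ‖a‖)⁻¹))
      ≤ ∏ k ∈ range n, (1 - ‖a‖ * ‖r‖ ^ k) := by
    refine Finset.prod_le_prod (fun k _ => (Real.exp_pos _).le) (fun k _ => ?_)
    refine exp_le_one_sub (by positivity) ?_ ha
    calc ‖a‖ * ‖r‖ ^ k ≤ ‖a‖ * 1 := by
          gcongr; exact pow_le_one₀ (norm_nonneg r) hr.le
      _ = ‖a‖ := mul_one _
  refine le_trans ?_ h2
  rw [← Real.exp_sum]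
  apply Real.exp_le_exp.2
  have hs : ∑ x ∈ range n, -(‖a‖ * ‖r‖ ^ x * (1 - ‖a‖)⁻¹)
      = -((∑ x ∈ range n, ‖r‖ ^ x) * (‖a‖ * (1 - ‖a‖)⁻¹)) := by
    rw [Finset.sum_mul, ← Finset.sum_neg_distrib]
    congr 1; ext x; ring
  rw [hs]
  have hg := geom_partial_le (norm_nonneg r) hr n
  have ha' : (0:ℝ) ≤ ‖a‖ * (1 - ‖a‖)⁻¹ := by
    have : (0:ℝ) < 1 - ‖a‖ := by linarith
    positivity
  nlinarith [hg, ha']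


lemma summable_log {a r : ℂ} (ha : ‖a‖ < 1) (hr : ‖r‖ < 1) :
    Summable fun k : ℕ => Complex.log (1 - a * r ^ k) := by
  refine Summable.of_norm_bounded (g := fun k => (‖a‖ * (1 - ‖a‖)⁻¹ / 2 + 1) * (‖a‖ * ‖r‖ ^ k)) ?_ ?_
  · exact ((summable_geometric_of_lt_one (norm_nonneg r) hr).mul_left _).mul_left _
  · intro k
    have hk : ‖-(a * r ^ k)‖ ≤ ‖a‖ := by
      rw [norm_neg, norm_mul, norm_pow]
      calc ‖a‖ * ‖r‖ ^ k ≤ ‖a‖ * 1 := by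
            gcongr; exact pow_le_one₀ (norm_nonneg r) hr.le
        _ = ‖a‖ := mul_one _
    have hk1 : ‖-(a * r ^ k)‖ < 1 := lt_of_le_of_lt hk ha
    have h1 := Complex.norm_log_one_add_le hk1
    have h2 : (1 : ℂ) - a * r ^ k = 1 + -(a * r ^ k) := by ring
    rw [h2]
    refine h1.trans ?_
    set t := ‖-(a * r ^ k)‖ with htdef
    have ht0 : 0 ≤ t := norm_nonneg _
    have h3 : (0:ℝ) < 1 - ‖a‖ := by linarith
    have h4 : (0:ℝ) < 1 - t := by linarith [hk1]
    have h5 : (1 - t)⁻¹ ≤ (1 - ‖a‖)⁻¹ := by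
      apply inv_anti₀ h3; linarith
    have hbound : t ^ 2 * (1 - t)⁻¹ / 2 ≤ t * (‖a‖ * (1 - ‖a‖)⁻¹ / 2) := by
      have h6 : t ^ 2 * (1 - t)⁻¹ ≤ t ^ 2 * (1 - ‖a‖)⁻¹ :=
        mul_le_mul_of_nonneg_left h5 (by positivity)
      have h7 : t ^ 2 * (1 - ‖a‖)⁻¹ ≤ t * ‖a‖ * (1 - ‖a‖)⁻¹ := by
        have : t ^ 2 ≤ t * ‖a‖ := by nlinarith
        apply mul_le_mul_of_nonneg_right this (by positivity)
      calc t ^ 2 * (1 - t)⁻¹ / 2 ≤ t * ‖a‖ * (1 - ‖a‖)⁻¹ / 2 := by linarith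
        _ = t * (‖a‖ * (1 - ‖a‖)⁻¹ / 2) := by ring
    have hta : t = ‖a‖ * ‖r‖ ^ k := by
      rw [htdef, norm_neg, norm_mul, norm_pow]
    calc t ^ 2 * (1 - t)⁻¹ / 2 + t ≤ t * (‖a‖ * (1 - ‖a‖)⁻¹ / 2) + t := by linarith
      _ = (‖a‖ * (1 - ‖a‖)⁻¹ / 2 + 1) * t := by ring
      _ = (‖a‖ * (1 - ‖a‖)⁻¹ / 2 + 1) * (‖a‖ * ‖r‖ ^ k) := by rw [hta]

lemma qPochInf_eq_exp {a r : ℂ} (ha : ‖a‖ < 1) (hr : ‖r‖ < 1) :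
    qPochInf a r = Complex.exp (∑' k : ℕ, Complex.log (1 - a * r ^ k)) := by
  have h := Complex.cexp_tsum_eq_tprod (f := fun k : ℕ => 1 - a * r ^ k)
    (fun k => factor_ne_zero ha hr.le k)
    (summable_log ha hr)
  exact h.symm

lemma qPochInf_ne_zero {a r : ℂ} (ha : ‖a‖ < 1) (hr : ‖r‖ < 1) :
    qPochInf a r ≠ 0 := by
  rw [qPochInf_eq_exp ha hr]; exact Complex.exp_ne_zero _

lemma multipliable_qPoch {a r : ℂ} (ha : ‖a‖ < 1) (hr : ‖r‖ < 1) :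
    Multipliable fun k : ℕ => 1 - a * r ^ k :=
  Complex.multipliable_of_summable_log (summable_log ha hr)

lemma tendsto_qPoch {a r : ℂ} (ha : ‖a‖ < 1) (hr : ‖r‖ < 1) :
    Filter.Tendsto (fun n => qPoch a r n) Filter.atTop (nhds (qPochInf a r)) :=
  (multipliable_qPoch ha hr).hasProd.tendsto_prod_nat

lemma qPoch_eq_exp {a r : ℂ} (ha : ‖a‖ < 1) (hr : ‖r‖ < 1) (n : ℕ) :
    qPoch a r n = Complex.exp (∑ k ∈ range n, Complex.log (1 - a * r ^ k)) := by
  rw [Complex.exp_sum, qPoch]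
  exact Finset.prod_congr rfl fun k _ =>
    (Complex.exp_log (factor_ne_zero ha hr.le k)).symm

lemma qPochInf_split {a r : ℂ} (ha : ‖a‖ < 1) (hr : ‖r‖ < 1) (n : ℕ) :
    qPochInf a r = qPoch a r n * qPochInf (a * r ^ n) r := by
  have harn : ‖a * r ^ n‖ < 1 := factor_norm_lt ha hr.le n
  have hsplit : (∑ i ∈ Finset.range n, Complex.log (1 - a * r ^ i))
      + ∑' i : ℕ, Complex.log (1 - a * r ^ (i + n))
      = ∑' i : ℕ, Complex.log (1 - a * r ^ i) :=
    Summable.sum_add_tsum_nat_add n (summable_log ha hr)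
  have htail : ∑' i : ℕ, Complex.log (1 - a * r ^ (i + n))
      = ∑' i : ℕ, Complex.log (1 - (a * r ^ n) * r ^ i) := by
    apply tsum_congr; intro k
    congr 2
    rw [pow_add]; ring
  rw [qPochInf_eq_exp ha hr, ← hsplit, Complex.exp_add,
    ← qPoch_eq_exp ha hr n, qPochInf_eq_exp harn hr, htail]

lemma qPochInf_even_odd {a r : ℂ} (ha : ‖a‖ < 1) (hr : ‖r‖ < 1) :
    qPochInf a r = qPochInf a (r ^ 2) * qPochInf (a * r) (r ^ 2) := by
  have hr2 : ‖r ^ 2‖ < 1 := by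
    rw [norm_pow]; exact pow_lt_one₀ (norm_nonneg r) hr (by norm_num)
  have har : ‖a * r‖ < 1 := by
    rw [norm_mul]
    nlinarith [norm_nonneg a, norm_nonneg r, ha, hr]
  have heq : ∀ k : ℕ, 1 - a * (r ^ 2) ^ k = 1 - a * r ^ (2 * k) := by
    intro k; rw [← pow_mul]
  have hoq : ∀ k : ℕ, 1 - a * r * (r ^ 2) ^ k = 1 - a * r ^ (2 * k + 1) := by
    intro k; rw [← pow_mul, pow_add, pow_one]; ring
  have he : Multipliable fun k : ℕ => (1 - a * r ^ (2 * k)) :=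
    (multipliable_qPoch ha hr2).congr heq
  have ho : Multipliable fun k : ℕ => (1 - a * r ^ (2 * k + 1)) :=
    (multipliable_qPoch har hr2).congr hoq
  have h := tprod_even_mul_odd (f := fun k : ℕ => 1 - a * r ^ k) he ho
  have h2 : qPochInf a (r ^ 2) = ∏' k : ℕ, (1 - a * r ^ (2 * k)) := tprod_congr heq
  have h3 : qPochInf (a * r) (r ^ 2) = ∏' k : ℕ, (1 - a * r ^ (2 * k + 1)) := tprod_congr hoq
  rw [h2, h3, qPochInf]
  exact h.symm

lemma qPochInf_mul {a b r : ℂ} (ha : ‖a‖ < 1) (hb : ‖b‖ < 1) (hr : ‖r‖ < 1) :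
    qPochInf a r * qPochInf b r = ∏' k : ℕ, ((1 - a * r ^ k) * (1 - b * r ^ k)) :=
  (Multipliable.tprod_mul (multipliable_qPoch ha hr) (multipliable_qPoch hb hr)).symm


/-! ### Euler's identity -/

noncomputable def eCo (r : ℂ) (m : ℕ) : ℂ := (-1) ^ m * r ^ m.choose 2 / qPoch r r m

noncomputable def eS (r w : ℂ) : ℂ := ∑' m : ℕ, eCo r m * w ^ m

lemma eCo_zero (r : ℂ) : eCo r 0 = 1 := by
  simp [eCo, qPoch]

lemma eCo_norm_le {r : ℂ} (hr : ‖r‖ < 1) (m : ℕ) :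
    ‖eCo r m‖ ≤ (Real.exp (-(‖r‖ * (1 - ‖r‖)⁻¹ * (1 - ‖r‖)⁻¹)))⁻¹ := by
  set δ := Real.exp (-(‖r‖ * (1 - ‖r‖)⁻¹ * (1 - ‖r‖)⁻¹)) with hδdef
  have hδ : 0 < δ := Real.exp_pos _
  have hnum : ‖(-1 : ℂ) ^ m * r ^ m.choose 2‖ ≤ 1 := by
    rw [norm_mul, norm_pow, norm_pow, norm_neg, norm_one, one_pow, one_mul]
    exact pow_le_one₀ (norm_nonneg r) hr.le
  have hden : δ ≤ ‖qPoch r r m‖ := qPoch_norm_ge hr hr m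
  rw [eCo, norm_div]
  calc ‖(-1 : ℂ) ^ m * r ^ m.choose 2‖ / ‖qPoch r r m‖ ≤ 1 / δ := by
        apply div_le_div₀ (by norm_num) hnum hδ hden
    _ = δ⁻¹ := one_div δ

lemma summable_eCo_mul {r : ℂ} (hr : ‖r‖ < 1) {w : ℂ} (hw : ‖w‖ < 1) :
    Summable fun m : ℕ => eCo r m * w ^ m := by
  refine Summable.of_norm_bounded (g := fun m => (Real.exp (-(‖r‖ * (1 - ‖r‖)⁻¹ * (1 - ‖r‖)⁻¹)))⁻¹ * ‖w‖ ^ m) ?_ ?_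
  · exact (summable_geometric_of_lt_one (norm_nonneg w) hw).mul_left _
  · intro m
    rw [norm_mul, norm_pow]
    exact mul_le_mul_of_nonneg_right (eCo_norm_le hr m) (by positivity)

lemma eCo_key {r : ℂ} (hr : ‖r‖ < 1) (m : ℕ) :
    eCo r (m + 1) * (1 - r * r ^ m) = -(eCo r m * r ^ m) := by
  have h1 : qPoch r r (m + 1) = qPoch r r m * (1 - r * r ^ m) := by
    rw [qPoch, qPoch, Finset.prod_range_succ]
  have h2 : (m + 1).choose 2 = m.choose 2 + m := by
    simp [Nat.choose_succ_succ, Nat.choose_one_right, Nat.add_comm]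
  have h3 : qPoch r r m ≠ 0 := qPoch_ne_zero hr hr.le m
  have h4 : (1 : ℂ) - r * r ^ m ≠ 0 := factor_ne_zero hr hr.le m
  rw [eCo, eCo, h1, h2]
  field_simp
  ring

lemma eS_funeq {r : ℂ} (hr : ‖r‖ < 1) {w : ℂ} (hw : ‖w‖ < 1) :
    eS r w = (1 - w) * eS r (r * w) := by
  have hrw : ‖r * w‖ < 1 := by
    rw [norm_mul]
    nlinarith [norm_nonneg r, norm_nonneg w, hr, hw]
  have hs1 := summable_eCo_mul hr hw
  have hs2 := summable_eCo_mul hr hrw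
  have hdiff : ∀ m : ℕ, eCo r m * w ^ m - eCo r m * (r * w) ^ m
      = eCo r m * (1 - r ^ m) * w ^ m := by
    intro m; rw [mul_pow]; ring
  have hs3 : Summable fun m : ℕ => eCo r m * (1 - r ^ m) * w ^ m := by
    refine (hs1.sub hs2).congr fun m => (hdiff m).symm ▸ rfl
  have h0 : eS r w - eS r (r * w) = ∑' m : ℕ, eCo r m * (1 - r ^ m) * w ^ m := by
    rw [eS, eS, ← Summable.tsum_sub hs1 hs2]
    exact tsum_congr hdiff
  have hshift : ∑' m : ℕ, eCo r m * (1 - r ^ m) * w ^ m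
      = ∑' m : ℕ, eCo r (m + 1) * (1 - r ^ (m + 1)) * w ^ (m + 1) := by
    rw [Summable.tsum_eq_zero_add hs3]
    simp [pow_zero]
  have hterm : ∀ m : ℕ, eCo r (m + 1) * (1 - r ^ (m + 1)) * w ^ (m + 1)
      = -w * (eCo r m * (r * w) ^ m) := by
    intro m
    have := eCo_key hr m
    have hp : r ^ (m + 1) = r * r ^ m := by rw [pow_succ]; ring
    rw [hp]
    calc eCo r (m + 1) * (1 - r * r ^ m) * w ^ (m + 1)
        = -(eCo r m * r ^ m) * w ^ (m + 1) := by rw [this]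
      _ = -w * (eCo r m * (r * w) ^ m) := by rw [mul_pow, pow_succ]; ring
  have h5 : ∑' m : ℕ, eCo r (m + 1) * (1 - r ^ (m + 1)) * w ^ (m + 1)
      = -w * eS r (r * w) := by
    rw [eS, ← tsum_mul_left]
    exact tsum_congr hterm
  have h6 : eS r w - eS r (r * w) = -w * eS r (r * w) := by
    rw [h0, hshift, h5]
  linear_combination h6

lemma eS_iter {r : ℂ} (hr : ‖r‖ < 1) {z : ℂ} (hz : ‖z‖ < 1) (N : ℕ) :
    eS r z = qPoch z r N * eS r (r ^ N * z) := by
  induction N with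
  | zero => simp [qPoch]
  | succ n ih =>
    have hn : ‖r ^ n * z‖ < 1 := by
      rw [norm_mul, norm_pow]
      calc ‖r‖ ^ n * ‖z‖ ≤ 1 * ‖z‖ := by
            gcongr
            exact pow_le_one₀ (norm_nonneg r) hr.le
        _ = ‖z‖ := one_mul _
        _ < 1 := hz
    rw [ih, eS_funeq hr hn]
    have hq : qPoch z r (n + 1) = qPoch z r n * (1 - z * r ^ n) := by
      rw [qPoch, qPoch, Finset.prod_range_succ]
    have hrz : r * (r ^ n * z) = r ^ (n + 1) * z := by rw [pow_succ]; ring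
    rw [hq, hrz]
    ring

lemma eS_sub_one_bound {r : ℂ} (hr : ‖r‖ < 1) {z w : ℂ} (hz : ‖z‖ < 1)
    (hw : ‖w‖ ≤ ‖z‖) :
    ‖eS r w - 1‖ ≤ (∑' m : ℕ, (Real.exp (-(‖r‖ * (1 - ‖r‖)⁻¹ * (1 - ‖r‖)⁻¹)))⁻¹ * ‖z‖ ^ m) * ‖w‖ := by
  have hw1 : ‖w‖ < 1 := lt_of_le_of_lt hw hz
  have hs := summable_eCo_mul hr hw1
  have h1 : eS r w - 1 = ∑' m : ℕ, eCo r (m + 1) * w ^ (m + 1) := by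
    rw [eS, Summable.tsum_eq_zero_add hs, eCo_zero]
    simp
  rw [h1]
  set δi := (Real.exp (-(‖r‖ * (1 - ‖r‖)⁻¹ * (1 - ‖r‖)⁻¹)))⁻¹ with hδi
  have hδi0 : 0 ≤ δi := by positivity
  have hsn : Summable fun m : ℕ => ‖eCo r (m + 1) * w ^ (m + 1)‖ := by
    have := (summable_eCo_mul hr hw1).norm
    exact (summable_nat_add_iff 1).2 this
  refine (norm_tsum_le_tsum_norm hsn).trans ?_
  have hb : ∀ m : ℕ, ‖eCo r (m + 1) * w ^ (m + 1)‖ ≤ (δi * ‖z‖ ^ m) * ‖w‖ := by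
    intro m
    rw [norm_mul, norm_pow]
    calc ‖eCo r (m + 1)‖ * ‖w‖ ^ (m + 1) ≤ δi * ‖w‖ ^ (m + 1) := by
          apply mul_le_mul_of_nonneg_right (eCo_norm_le hr (m + 1)) (by positivity)
      _ = δi * ‖w‖ ^ m * ‖w‖ := by rw [pow_succ]; ring
      _ ≤ δi * ‖z‖ ^ m * ‖w‖ := by
          gcongr
      _ = (δi * ‖z‖ ^ m) * ‖w‖ := by ring
  have hgs : Summable fun m : ℕ => (δi * ‖z‖ ^ m) * ‖w‖ :=
    (((summable_geometric_of_lt_one (norm_nonneg z) hz).mul_left δi).mul_right ‖w‖)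
  calc ∑' m : ℕ, ‖eCo r (m + 1) * w ^ (m + 1)‖
      ≤ ∑' m : ℕ, (δi * ‖z‖ ^ m) * ‖w‖ := Summable.tsum_le_tsum hb hsn hgs
    _ = (∑' m : ℕ, δi * ‖z‖ ^ m) * ‖w‖ := tsum_mul_right

lemma euler {r : ℂ} (hr : ‖r‖ < 1) {z : ℂ} (hz : ‖z‖ < 1) :
    ∑' m : ℕ, eCo r m * z ^ m = qPochInf z r := by
  have hzr : ‖z‖ < 1 := hz
  set M := (∑' m : ℕ, (Real.exp (-(‖r‖ * (1 - ‖r‖)⁻¹ * (1 - ‖r‖)⁻¹)))⁻¹ * ‖z‖ ^ m) with hM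
  have hMnn : 0 ≤ M := by
    rw [hM]
    apply tsum_nonneg
    intro m; positivity
  -- the sequence of partial products converges to qPochInf z r
  have htd : Filter.Tendsto (fun N => qPoch z r N) Filter.atTop (nhds (qPochInf z r)) :=
    tendsto_qPoch hz hr
  -- eS r (r^N * z) → 1
  have hb : ∀ N : ℕ, ‖eS r (r ^ N * z) - 1‖ ≤ (M * ‖z‖) * ‖r‖ ^ N := by
    intro N
    have hwle : ‖r ^ N * z‖ ≤ ‖z‖ := by
      rw [norm_mul, norm_pow]
      calc ‖r‖ ^ N * ‖z‖ ≤ 1 * ‖z‖ := by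
            gcongr
            exact pow_le_one₀ (norm_nonneg r) hr.le
        _ = ‖z‖ := one_mul _
    refine (eS_sub_one_bound hr hz hwle).trans ?_
    rw [norm_mul, norm_pow]
    calc M * (‖r‖ ^ N * ‖z‖) = (M * ‖z‖) * ‖r‖ ^ N := by ring
      _ ≤ (M * ‖z‖) * ‖r‖ ^ N := le_refl _
  have htend0 : Filter.Tendsto (fun N : ℕ => eS r (r ^ N * z) - 1) Filter.atTop (nhds 0) := by
    have h0 : Filter.Tendsto (fun N : ℕ => (M * ‖z‖) * ‖r‖ ^ N) Filter.atTop
        (nhds ((M * ‖z‖) * 0)) :=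
      (tendsto_pow_atTop_nhds_zero_of_lt_one (norm_nonneg r) hr).const_mul _
    rw [mul_zero] at h0
    exact squeeze_zero_norm hb h0
  have htend1 : Filter.Tendsto (fun N : ℕ => eS r (r ^ N * z)) Filter.atTop (nhds 1) := by
    have := htend0.add_const 1
    simpa using this
  have hprod : Filter.Tendsto (fun N : ℕ => qPoch z r N * eS r (r ^ N * z))
      Filter.atTop (nhds (qPochInf z r * 1)) := htd.mul htend1
  have hconst : ∀ N : ℕ, qPoch z r N * eS r (r ^ N * z) = eS r z :=
    fun N => (eS_iter hr hz N).symm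
  have : Filter.Tendsto (fun _ : ℕ => eS r z) Filter.atTop (nhds (qPochInf z r * 1)) := by
    refine hprod.congr fun N => hconst N
  have h2 := tendsto_nhds_unique this tendsto_const_nhds
  rw [mul_one] at h2
  rw [← eS]
  exact h2.symm


/-! ### finite q-binomial identity -/

lemma qbinom_sum {b r : ℂ} (hr : ‖r‖ < 1) (N : ℕ) :
    ∑ n ∈ range (N + 1), qPoch b r n * b ^ (N - n) / (qPoch r r n * qPoch r r (N - n))
      = 1 / qPoch r r N := by
  have hP : ∀ k, qPoch r r k ≠ 0 := qPoch_ne_zero hr hr.le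
  have hPsucc : ∀ k, qPoch r r (k + 1) = qPoch r r k * (1 - r * r ^ k) := by
    intro k; rw [qPoch, qPoch, Finset.prod_range_succ]
  have hBsucc : ∀ k, qPoch b r (k + 1) = qPoch b r k * (1 - b * r ^ k) := by
    intro k; rw [qPoch, qPoch, Finset.prod_range_succ]
  have hrk : ∀ k : ℕ, (1 : ℂ) - r * r ^ k ≠ 0 := factor_ne_zero hr hr.le
  induction N with
  | zero => simp [qPoch]
  | succ N ih =>
    set P := qPoch r r with hPdef
    set B := qPoch b r with hBdef
    set U : ℕ → ℂ := fun n =>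
      if n = 0 then 0 else B n * b ^ (N + 1 - n) / (P (n - 1) * P (N + 1 - n) * (1 - r * r ^ N))
      with hU
    set V : ℕ → ℂ := fun n =>
      if n = N + 1 then 0 else r ^ n * B n * b ^ (N + 1 - n) / (P n * P (N - n) * (1 - r * r ^ N))
      with hV
    have hUV : ∀ n ∈ range (N + 2), B n * b ^ (N + 1 - n) / (P n * P (N + 1 - n)) = U n + V n := by
      intro n hn
      rw [Finset.mem_range] at hn
      rcases Nat.eq_zero_or_pos n with h0 | hpos
      · subst h0
        simp only [hU, hV, if_pos rfl, if_neg (by omega : (0:ℕ) ≠ N + 1)]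
        have e1 : P 0 = 1 := by rw [hPdef, qPoch, Finset.prod_range_zero]
        have e2 : N + 1 - 0 = N + 1 := by omega
        have e3 : N - 0 = N := by omega
        rw [e2, e3, e1, hPsucc N]
        rw [zero_add]
        field_simp
      · rcases Nat.eq_or_lt_of_le (by omega : n ≤ N + 1) with htop | hmid
        · subst htop
          simp only [hU, hV, if_pos rfl, if_neg (by omega : N + 1 ≠ 0)]
          have e1 : P 0 = 1 := by rw [hPdef, qPoch, Finset.prod_range_zero]
          have e2 : N + 1 - (N + 1) = 0 := by omega
          have e3 : N + 1 - 1 = N := by omega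
          rw [e2, e3, e1, hPsucc N]
          field_simp
          rw [add_zero]
        · -- 1 ≤ n ≤ N
          obtain ⟨k, rfl⟩ : ∃ k, n = k + 1 := ⟨n - 1, by omega⟩
          obtain ⟨j, hj⟩ : ∃ j, N = k + 1 + j := ⟨N - (k + 1), by omega⟩
          subst hj
          simp only [hU, hV, if_neg (by omega : k + 1 ≠ 0),
            if_neg (by omega : k + 1 ≠ k + 1 + j + 1)]
          have e1 : k + 1 + j + 1 - (k + 1) = j + 1 := by omega
          have e2 : k + 1 + j - (k + 1) = j := by omega
          have e3 : k + 1 - 1 = k := by omega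
          rw [e1, e2, e3, hPsucc k, hPsucc j]
          have hPk := hP k
          have hPj := hP j
          have h1 := hrk k
          have h2 := hrk j
          have h3 := hrk (k + 1 + j)
          have hd1 : P k * (P j * (1 - r * r ^ j)) * (1 - r * r ^ (k + 1 + j)) ≠ 0 :=
            mul_ne_zero (mul_ne_zero hPk (mul_ne_zero hPj h2)) h3
          have hd2 : P k * (1 - r * r ^ k) * P j * (1 - r * r ^ (k + 1 + j)) ≠ 0 :=
            mul_ne_zero (mul_ne_zero (mul_ne_zero hPk h1) hPj) h3
          have hd0 : P k * (1 - r * r ^ k) * (P j * (1 - r * r ^ j)) ≠ 0 :=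
            mul_ne_zero (mul_ne_zero hPk h1) (mul_ne_zero hPj h2)
          rw [div_add_div _ _ hd1 hd2, div_eq_div_iff hd0 (mul_ne_zero hd1 hd2)]
          ring
    rw [Finset.sum_congr rfl hUV, Finset.sum_add_distrib]
    have hsU : ∑ n ∈ range (N + 2), U n = ∑ n ∈ range (N + 1), U (n + 1) := by
      rw [Finset.sum_range_succ']
      simp [hU]
    have hsV : ∑ n ∈ range (N + 2), V n = ∑ n ∈ range (N + 1), V n := by
      rw [Finset.sum_range_succ]
      simp [hV]
    rw [hsU, hsV, ← Finset.sum_add_distrib]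
    have hterm : ∀ n ∈ range (N + 1), U (n + 1) + V n
        = (B n * b ^ (N - n) / (P n * P (N - n))) * (1 - r * r ^ N)⁻¹ := by
      intro n hn
      rw [Finset.mem_range] at hn
      have hn' : n ≤ N := by omega
      simp only [hU, hV, if_neg (by omega : n + 1 ≠ 0), if_neg (by omega : n ≠ N + 1)]
      have e1 : n + 1 - 1 = n := by omega
      have e2 : N + 1 - (n + 1) = N - n := by omega
      have e3 : N + 1 - n = (N - n) + 1 := by omega
      rw [e1, e2, e3, hBsucc n]
      have hPn := hP n
      have hPNn := hP (N - n)
      have h3 := hrk N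
      have h4 := hrk n
      field_simp
      ring
    rw [Finset.sum_congr rfl hterm, ← Finset.sum_mul, ih, hPsucc N]
    have h3 := hrk N
    have hPN := hP N
    field_simp


/-! ### main rearrangement -/

lemma choose2_add (n m : ℕ) : (n + m).choose 2 = n.choose 2 + m.choose 2 + n * m := by
  induction m with
  | zero => simp
  | succ m ih =>
    have h1 : (n + (m + 1)).choose 2 = (n + m).choose 2 + (n + m) := by
      rw [show n + (m + 1) = (n + m) + 1 by omega]
      simp [Nat.choose_succ_succ, Nat.choose_one_right, Nat.add_comm]
    have h2 : (m + 1).choose 2 = m.choose 2 + m := by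
      simp [Nat.choose_succ_succ, Nat.choose_one_right, Nat.add_comm]
    rw [h1, ih, h2]
    ring

lemma tsum_prod_antidiagonal (F : ℕ × ℕ → ℂ) (hF : Summable F) :
    ∑' p : ℕ × ℕ, F p = ∑' n : ℕ, ∑ kl ∈ Finset.HasAntidiagonal.antidiagonal n, F kl := by
  conv_rhs => congr; ext; rw [← Finset.sum_finset_coe, ← tsum_fintype (L := SummationFilter.unconditional _)]
  rw [← Finset.HasAntidiagonal.sigmaAntidiagonalEquivProd.tsum_eq F]
  exact Summable.tsum_sigma' (fun n => (hasSum_fintype _).summable)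
    (Finset.HasAntidiagonal.sigmaAntidiagonalEquivProd.summable_iff.mpr hF)

lemma key_sum {r b c x : ℂ} (hr : ‖r‖ < 1) (hc : ‖c‖ < 1) (hx : ‖x‖ < 1)
    (hcb : c = -(b * x)) :
    (∑' n : ℕ, r ^ n.choose 2 * x ^ n * qPoch b r n / (qPoch r r n * qPoch c r n))
      * qPochInf c r = qPochInf (-x) r := by
  have hP : ∀ k, qPoch r r k ≠ 0 := qPoch_ne_zero hr hr.le
  have hC : ∀ k, qPoch c r k ≠ 0 := qPoch_ne_zero hc hr.le
  set δi := (Real.exp (-(‖r‖ * (1 - ‖r‖)⁻¹ * (1 - ‖r‖)⁻¹)))⁻¹ with hδi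
  have hδi0 : (0:ℝ) ≤ δi := by positivity
  set Cb := Real.exp (‖b‖ * (1 - ‖r‖)⁻¹) with hCb
  have hCb0 : (0:ℝ) ≤ Cb := (Real.exp_pos _).le
  set F : ℕ × ℕ → ℂ := fun p =>
    r ^ ((p.1 + p.2).choose 2) * x ^ (p.1 + p.2) * (qPoch b r p.1 * b ^ p.2)
      / (qPoch r r p.1 * qPoch r r p.2) with hFdef
  -- summability of F
  have hxb : ‖x‖ * ‖b‖ = ‖c‖ := by
    rw [hcb, norm_neg, norm_mul, mul_comm]
  have hFb : ∀ p : ℕ × ℕ, ‖F p‖ ≤ (Cb * (δi * δi)) * (‖x‖ ^ p.1 * ‖c‖ ^ p.2) := by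
    rintro ⟨n, m⟩
    have hPn := qPoch_norm_ge hr hr n
    have hPm := qPoch_norm_ge hr hr m
    have hδpos : (0:ℝ) < Real.exp (-(‖r‖ * (1 - ‖r‖)⁻¹ * (1 - ‖r‖)⁻¹)) := Real.exp_pos _
    have hBn : ‖qPoch b r n‖ ≤ Cb := qPoch_norm_le hr n
    have hnum : ‖r ^ ((n + m).choose 2) * x ^ (n + m) * (qPoch b r n * b ^ m)‖
        ≤ Cb * (‖x‖ ^ n * ‖c‖ ^ m) := by
      rw [norm_mul, norm_mul, norm_mul, norm_pow, norm_pow, norm_pow]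
      have h1 : ‖r‖ ^ (n + m).choose 2 ≤ 1 := pow_le_one₀ (norm_nonneg r) hr.le
      have h2 : ‖x‖ ^ (n + m) * (‖qPoch b r n‖ * ‖b‖ ^ m)
          ≤ Cb * (‖x‖ ^ n * ‖c‖ ^ m) := by
        have e1 : ‖x‖ ^ (n + m) * ‖b‖ ^ m = ‖x‖ ^ n * ‖c‖ ^ m := by
          rw [pow_add, ← hxb, mul_pow]
          ring
        calc ‖x‖ ^ (n + m) * (‖qPoch b r n‖ * ‖b‖ ^ m)
            ≤ ‖x‖ ^ (n + m) * (Cb * ‖b‖ ^ m) := by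
              apply mul_le_mul_of_nonneg_left _ (by positivity)
              apply mul_le_mul_of_nonneg_right hBn (by positivity)
          _ = (‖x‖ ^ (n + m) * ‖b‖ ^ m) * Cb := by ring
          _ = (‖x‖ ^ n * ‖c‖ ^ m) * Cb := by rw [e1]
          _ = Cb * (‖x‖ ^ n * ‖c‖ ^ m) := by ring
      calc ‖r‖ ^ (n + m).choose 2 * ‖x‖ ^ (n + m) * (‖qPoch b r n‖ * ‖b‖ ^ m)
          ≤ 1 * (‖x‖ ^ (n + m) * (‖qPoch b r n‖ * ‖b‖ ^ m)) := by
            rw [mul_assoc]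
            apply mul_le_mul_of_nonneg_right h1 (by positivity)
        _ = ‖x‖ ^ (n + m) * (‖qPoch b r n‖ * ‖b‖ ^ m) := one_mul _
        _ ≤ Cb * (‖x‖ ^ n * ‖c‖ ^ m) := h2
    have hden : ‖qPoch r r n * qPoch r r m‖ ≥ δi⁻¹ * δi⁻¹ := by
      rw [hδi, inv_inv, norm_mul]
      exact mul_le_mul hPn hPm hδpos.le (norm_nonneg _)
    rw [hFdef]
    simp only
    rw [norm_div]
    have hdenpos : (0:ℝ) < δi⁻¹ * δi⁻¹ := by
      rw [hδi, inv_inv]; positivity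
    calc ‖r ^ ((n + m).choose 2) * x ^ (n + m) * (qPoch b r n * b ^ m)‖
          / ‖qPoch r r n * qPoch r r m‖
        ≤ (Cb * (‖x‖ ^ n * ‖c‖ ^ m)) / (δi⁻¹ * δi⁻¹) :=
          div_le_div₀ (by positivity) hnum hdenpos hden
      _ = (Cb * (δi * δi)) * (‖x‖ ^ n * ‖c‖ ^ m) := by
          field_simp
  have hgeom : Summable fun p : ℕ × ℕ => ‖x‖ ^ p.1 * ‖c‖ ^ p.2 :=
    (summable_geometric_of_lt_one (norm_nonneg x) hx).mul_of_nonneg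
      (summable_geometric_of_lt_one (norm_nonneg c) hc)
      (fun n => by positivity) (fun m => by positivity)
  have hF : Summable F := Summable.of_norm_bounded (hgeom.mul_left _) hFb
  -- row computation
  have hrow : ∀ n : ℕ,
      (r ^ n.choose 2 * x ^ n * qPoch b r n / (qPoch r r n * qPoch c r n)) * qPochInf c r
        = ∑' m : ℕ, F (n, m) := by
    intro n
    have hcrn : ‖c * r ^ n‖ < 1 := factor_norm_lt hc hr.le n
    have hterm2 : ∀ m : ℕ, eCo r m * (c * r ^ n) ^ m
        = r ^ m.choose 2 * ((b * x) * r ^ n) ^ m / qPoch r r m := by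
      intro m
      have hsg : (-1 : ℂ) ^ m * (c * r ^ n) ^ m = ((b * x) * r ^ n) ^ m := by
        rw [← neg_pow]
        congr 1
        rw [hcb]; ring
      calc eCo r m * (c * r ^ n) ^ m
          = ((-1 : ℂ) ^ m * (c * r ^ n) ^ m) * r ^ m.choose 2 / qPoch r r m := by
            rw [eCo]; ring
        _ = ((b * x) * r ^ n) ^ m * r ^ m.choose 2 / qPoch r r m := by rw [hsg]
        _ = r ^ m.choose 2 * ((b * x) * r ^ n) ^ m / qPoch r r m := by ring
    rw [qPochInf_split hc hr n, ← euler hr hcrn, ← tsum_mul_left, ← tsum_mul_left]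
    apply tsum_congr
    intro m
    rw [hterm2 m, hFdef]
    simp only
    have hPm := hP m
    have hPn := hP n
    have hCn := hC n
    have hexp : r ^ ((n + m).choose 2) = r ^ n.choose 2 * r ^ m.choose 2 * r ^ (n * m) := by
      rw [choose2_add, pow_add, pow_add]
    have hxpow : x ^ (n + m) = x ^ n * x ^ m := pow_add x n m
    have hbxr : ((b * x) * r ^ n) ^ m = b ^ m * x ^ m * r ^ (n * m) := by
      rw [mul_pow, mul_pow, ← pow_mul]
    rw [hexp, hxpow, hbxr]
    field_simp
  -- assemble
  have hrowS : ∀ n : ℕ, Summable fun m : ℕ => F (n, m) := fun n => hF.prod_factor n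
  calc (∑' n : ℕ, r ^ n.choose 2 * x ^ n * qPoch b r n / (qPoch r r n * qPoch c r n))
        * qPochInf c r
      = ∑' n : ℕ, (r ^ n.choose 2 * x ^ n * qPoch b r n / (qPoch r r n * qPoch c r n))
          * qPochInf c r := tsum_mul_right.symm
    _ = ∑' n : ℕ, ∑' m : ℕ, F (n, m) := tsum_congr hrow
    _ = ∑' p : ℕ × ℕ, F p := (Summable.tsum_prod' hF hrowS).symm
    _ = ∑' N : ℕ, ∑ kl ∈ Finset.HasAntidiagonal.antidiagonal N, F kl := tsum_prod_antidiagonal F hF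
    _ = ∑' N : ℕ, eCo r N * (-x) ^ N := by
        apply tsum_congr
        intro N
        rw [Finset.Nat.sum_antidiagonal_eq_sum_range_succ_mk]
        have hterm : ∀ k ∈ range (N + 1), F (k, N - k)
            = (r ^ N.choose 2 * x ^ N) * (qPoch b r k * b ^ (N - k)
                / (qPoch r r k * qPoch r r (N - k))) := by
          intro k hk
          rw [Finset.mem_range] at hk
          rw [hFdef]
          simp only
          rw [show k + (N - k) = N by omega]
          ring
        rw [Finset.sum_congr rfl hterm, ← Finset.mul_sum, qbinom_sum hr N]
        have hneg : eCo r N * (-x) ^ N = r ^ N.choose 2 * x ^ N / qPoch r r N := by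
          have h1 : (-1 : ℂ) ^ N * (-x) ^ N = x ^ N := by
            rw [← mul_pow]; norm_num
          calc eCo r N * (-x) ^ N
              = ((-1 : ℂ) ^ N * (-x) ^ N) * r ^ N.choose 2 / qPoch r r N := by
                rw [eCo]; ring
            _ = x ^ N * r ^ N.choose 2 / qPoch r r N := by rw [h1]
            _ = r ^ N.choose 2 * x ^ N / qPoch r r N := by ring
        rw [hneg]
        ring
    _ = qPochInf (-x) r := euler hr (by rw [norm_neg]; exact hx)


/-! ### specialisation to the theorem -/

lemma split3 (q : ℂ) (n : ℕ) :
    qPoch q q (3 * n) = qPoch q (q ^ 3) n * qPoch (q ^ 2) (q ^ 3) n * qPoch (q ^ 3) (q ^ 3) n := by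
  induction n with
  | zero => simp [qPoch]
  | succ n ih =>
    have h3 : 3 * (n + 1) = 3 * n + 1 + 1 + 1 := by omega
    rw [h3]
    simp only [qPoch] at ih ⊢
    simp only [Finset.prod_range_succ]
    rw [ih]
    simp only [← pow_mul]
    ring

lemma split2 (q : ℂ) (n : ℕ) :
    qPoch (q ^ 2) (q ^ 6) n = qPoch q (q ^ 3) n * qPoch (-q) (q ^ 3) n := by
  induction n with
  | zero => simp [qPoch]
  | succ n ih =>
    simp only [qPoch] at ih ⊢
    simp only [Finset.prod_range_succ]
    rw [ih]
    simp only [← pow_mul]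
    ring

end RRaux

open RRaux in
theorem stmt10 (q : ℂ) (hq : ‖q‖ < 1) :
    ∑' n : ℕ, (q ^ (3 * n.choose 2 + n) * qPoch (q ^ 2) (q ^ 6) n / qPoch q q (3 * n))
    = 1 / (qPochInf q (q ^ 3) * qPochInf (q ^ 5) (q ^ 6)) := by
  have hq' : ‖q‖ < 1 := hq
  have h0 : (0:ℝ) ≤ ‖q‖ := norm_nonneg q
  have hpow : ∀ k : ℕ, k ≠ 0 → ‖q ^ k‖ < 1 := by
    intro k hk
    rw [norm_pow]
    exact pow_lt_one₀ h0 hq' hk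
  have hq2 := hpow 2 (by norm_num)
  have hq3 := hpow 3 (by norm_num)
  have hq5 := hpow 5 (by norm_num)
  have hq6 := hpow 6 (by norm_num)
  have hnq : ‖-q‖ < 1 := by rwa [norm_neg]
  -- termwise rewriting
  have hterm : ∀ n : ℕ, q ^ (3 * n.choose 2 + n) * qPoch (q ^ 2) (q ^ 6) n / qPoch q q (3 * n)
      = (q ^ 3) ^ n.choose 2 * q ^ n * qPoch (-q) (q ^ 3) n
        / (qPoch (q ^ 3) (q ^ 3) n * qPoch (q ^ 2) (q ^ 3) n) := by
    intro n
    rw [split3 q n, split2 q n]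
    have he : q ^ (3 * n.choose 2 + n) = (q ^ 3) ^ n.choose 2 * q ^ n := by
      rw [pow_add, pow_mul]
    rw [he]
    have h1 : qPoch q (q ^ 3) n ≠ 0 := qPoch_ne_zero hq' hq3.le n
    have h2 : qPoch (q ^ 2) (q ^ 3) n ≠ 0 := qPoch_ne_zero hq2 hq3.le n
    have h3 : qPoch (q ^ 3) (q ^ 3) n ≠ 0 := qPoch_ne_zero hq3 hq3.le n
    have h4 : qPoch (-q) (q ^ 3) n ≠ 0 := qPoch_ne_zero hnq hq3.le n
    field_simp
  rw [tsum_congr hterm]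
  -- apply the key summation
  have hkey := key_sum (r := q ^ 3) (b := -q) (c := q ^ 2) (x := q) hq3 hq2 hq' (by ring)
  -- infinite product identities
  have heo := qPochInf_even_odd (a := q ^ 2) (r := q ^ 3) hq2 hq3
  have e1 : ((q : ℂ) ^ 3) ^ 2 = q ^ 6 := by ring
  have e2 : (q : ℂ) ^ 2 * q ^ 3 = q ^ 5 := by ring
  rw [e1, e2] at heo
  have hmul : qPochInf q (q ^ 3) * qPochInf (-q) (q ^ 3) = qPochInf (q ^ 2) (q ^ 6) := by
    rw [qPochInf_mul hq' hnq hq3, qPochInf]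
    apply tprod_congr
    intro k
    simp only [← pow_mul]
    ring
  -- nonvanishing
  have hA : qPochInf q (q ^ 3) ≠ 0 := qPochInf_ne_zero hq' hq3
  have hB : qPochInf (-q) (q ^ 3) ≠ 0 := qPochInf_ne_zero hnq hq3
  have hC56 : qPochInf (q ^ 5) (q ^ 6) ≠ 0 := qPochInf_ne_zero hq5 hq6
  have hC2 : qPochInf (q ^ 2) (q ^ 3) ≠ 0 := qPochInf_ne_zero hq2 hq3
  -- conclude
  have hfac : qPochInf (q ^ 2) (q ^ 3)
      = qPochInf q (q ^ 3) * qPochInf (-q) (q ^ 3) * qPochInf (q ^ 5) (q ^ 6) := by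
    rw [heo, hmul]
  set S := ∑' n : ℕ, (q ^ 3) ^ n.choose 2 * q ^ n * qPoch (-q) (q ^ 3) n
      / (qPoch (q ^ 3) (q ^ 3) n * qPoch (q ^ 2) (q ^ 3) n) with hS
  have hkey' : S * (qPochInf q (q ^ 3) * qPochInf (-q) (q ^ 3) * qPochInf (q ^ 5) (q ^ 6))
      = qPochInf (-q) (q ^ 3) := by
    rw [← hfac]
    exact hkey
  rw [eq_div_iff (mul_ne_zero hA hC56)]
  apply mul_right_cancel₀ hB
  rw [one_mul]
  linear_combination hkey'
end
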